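/- arXiv:2511.22932 — 7 statements merged into one kernel-verified Lean document; each statement's English description precedes it below -/
import Mathlib

section
/- (Monotonicity of the minimal wave speed in the angle.) The function α ↦ c*(α) is strictly decreasing on [0, π/6] and strictly increasing on [π/6, π/3]: if 0 ≤ α₁ < α₂ ≤ π/6 then c*(α₂) < c*(α₁), and if π/6 ≤ α₁ < α₂ ≤ π/3 then c*(α₁) < c*(α₂). -/
open Real Set Filter

noncomputable def delta1 (α : ℝ) : ℝ := Real.cos α
noncomputable def delta2 (α : ℝ) : ℝ := (1/2) * Real.cos α + (Real.sqrt 3 / 2) * Real.sin α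
noncomputable def delta3 (α : ℝ) : ℝ := (1/2) * Real.cos α - (Real.sqrt 3 / 2) * Real.sin α

/-- The function g_α(λ) from the minimal wave speed formula, with `a` playing the role of f'(0). -/
noncomputable def gfun (a α l : ℝ) : ℝ :=
  (1/6) * ((Real.exp (l * delta1 α) + Real.exp (-(l * delta1 α)))
    + (Real.exp (l * delta2 α) + Real.exp (-(l * delta2 α)))
    + (Real.exp (l * delta3 α) + Real.exp (-(l * delta3 α)))) - 1 + a

/-- The minimal wave speed c*(α) = inf_{λ>0} g_α(λ)/λ. -/
noncomputable def cstar (a α : ℝ) : ℝ := sInf {c : ℝ | ∃ l : ℝ, 0 < l ∧ c = gfun a α l / l}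



lemma my_sinh_lt_mul_cosh {t : ℝ} (ht : 0 < t) : Real.sinh t < t * Real.cosh t := by
  have h : StrictMonoOn (fun t : ℝ => t * Real.cosh t - Real.sinh t) (Ici 0) := by
    apply strictMonoOn_of_deriv_pos (convex_Ici 0)
    · fun_prop
    · intro x hx
      rw [interior_Ici, mem_Ioi] at hx
      have hd : HasDerivAt (fun t : ℝ => t * Real.cosh t - Real.sinh t) (x * Real.sinh x) x := by
        have := ((hasDerivAt_id x).mul (Real.hasDerivAt_cosh x)).sub (Real.hasDerivAt_sinh x)
        exact this.congr_deriv (by simp)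
      rw [hd.deriv]
      exact mul_pos hx (Real.sinh_pos_iff.2 hx)
  have := h (self_mem_Ici) (le_of_lt ht : (0:ℝ) ≤ t) ht
  simpa using this

lemma my_A2 {t : ℝ} (ht : 0 < t) : 3 * Real.sinh t * Real.cosh t < t * (2 * Real.cosh t ^ 2 + 1) := by
  have h : StrictMonoOn (fun t : ℝ => t * (2 * Real.cosh t ^ 2 + 1) - 3 * Real.sinh t * Real.cosh t) (Ici 0) := by
    apply strictMonoOn_of_deriv_pos (convex_Ici 0)
    · fun_prop
    · intro x hx
      rw [interior_Ici, mem_Ioi] at hx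
      have hd : HasDerivAt (fun t : ℝ => t * (2 * Real.cosh t ^ 2 + 1) - 3 * Real.sinh t * Real.cosh t)
          ((2 * Real.cosh x ^ 2 + 1) + x * (2 * (2 * Real.cosh x * Real.sinh x))
            - (3 * Real.cosh x * Real.cosh x + 3 * Real.sinh x * Real.sinh x)) x := by
        have h1 : HasDerivAt (fun t : ℝ => t * (2 * Real.cosh t ^ 2 + 1))
            (1 * (2 * Real.cosh x ^ 2 + 1) + x * (2 * ((2:ℕ) * Real.cosh x ^ (2-1) * Real.sinh x))) x :=
          (hasDerivAt_id x).mul ((((Real.hasDerivAt_cosh x).pow 2).const_mul 2).add_const 1)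
        have h2 : HasDerivAt (fun t : ℝ => 3 * Real.sinh t * Real.cosh t)
            ((3 * Real.cosh x) * Real.cosh x + (3 * Real.sinh x) * Real.sinh x) x :=
          ((Real.hasDerivAt_sinh x).const_mul 3).mul (Real.hasDerivAt_cosh x)
        exact (h1.sub h2).congr_deriv (by rw [show (2:ℕ)-1 = 1 from rfl]; push_cast; ring)
      rw [hd.deriv]
      have hc := Real.cosh_sq x
      have hs := Real.sinh_pos_iff.2 hx
      have hlt := my_sinh_lt_mul_cosh hx
      nlinarith [Real.cosh_pos x]
  have := h (self_mem_Ici) (le_of_lt ht : (0:ℝ) ≤ t) ht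
  simp only [Real.cosh_zero, Real.sinh_zero] at this
  nlinarith [this]

lemma my_core {x y : ℝ} (hy : 0 < y) (hxy : y < x) :
    3 * x * Real.cosh x * Real.sinh y < y * Real.sinh x * (2 * Real.cosh x + Real.cosh y) := by
  set cy := Real.cosh y with hcy
  have hcy1 : 1 ≤ cy := Real.one_le_cosh y
  have hcy0 : 0 < cy := lt_of_lt_of_le one_pos hcy1
  have hmono : StrictMonoOn (fun t : ℝ => Real.sinh t / (t * Real.cosh t) + (2 / cy) * (Real.sinh t / t)) (Ici y) := by
    apply strictMonoOn_of_deriv_pos (convex_Ici y)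
    · apply ContinuousOn.add
      · apply ContinuousOn.div Real.continuous_sinh.continuousOn
          (continuous_id.mul Real.continuous_cosh).continuousOn
        intro t ht
        exact (mul_pos (lt_of_lt_of_le hy ht) (Real.cosh_pos t)).ne'
      · exact continuousOn_const.mul (Real.continuous_sinh.continuousOn.div
          continuous_id.continuousOn (fun t ht => (lt_of_lt_of_le hy ht).ne'))
    · intro t ht
      rw [interior_Ici, mem_Ioi] at ht
      have ht0 : 0 < t := hy.trans ht
      have hden1 : t * Real.cosh t ≠ 0 := (mul_pos ht0 (Real.cosh_pos t)).ne'
      have hd1 : HasDerivAt (fun t : ℝ => Real.sinh t / (t * Real.cosh t))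
          ((Real.cosh t * (t * Real.cosh t) - Real.sinh t * (1 * Real.cosh t + t * Real.sinh t))
            / (t * Real.cosh t) ^ 2) t :=
        (Real.hasDerivAt_sinh t).div ((hasDerivAt_id t).mul (Real.hasDerivAt_cosh t)) hden1
      have hd2 : HasDerivAt (fun t : ℝ => Real.sinh t / t)
          ((Real.cosh t * t - Real.sinh t * 1) / t ^ 2) t :=
        (Real.hasDerivAt_sinh t).div (hasDerivAt_id t) ht0.ne'
      have hd := hd1.add (hd2.const_mul (2 / cy))
      rw [show deriv (fun t : ℝ => Real.sinh t / (t * Real.cosh t) + (2 / cy) * (Real.sinh t / t)) t = _ from hd.deriv]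
      have hc0 : 0 < Real.cosh t := Real.cosh_pos t
      have hcyc : cy ≤ Real.cosh t := by
        rw [hcy, Real.cosh_le_cosh, abs_of_pos hy, abs_of_pos ht0]
        exact ht.le
      set s := Real.sinh t with hs
      set c := Real.cosh t with hc
      have key : (c * (t * c) - s * (1 * c + t * s)) / (t * c) ^ 2 + 2 / cy * ((c * t - s * 1) / t ^ 2)
          = ((t * c ^ 2 - s * c - t * s ^ 2) * cy + 2 * (c * t - s) * c ^ 2) / (t ^ 2 * c ^ 2 * cy) := by
        field_simp
        ring
      rw [key]
      apply div_pos ?_ (by positivity)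
      have h1 := my_A2 ht0
      have h2 := my_sinh_lt_mul_cosh ht0
      rw [← hs, ← hc] at h1 h2
      have hts : t ≤ s * c := by
        have h4 : t < s := Real.self_lt_sinh_iff.2 ht0
        have h5 : 1 ≤ c := Real.one_le_cosh t
        nlinarith
      have hsq : c ^ 2 = s ^ 2 + 1 := Real.cosh_sq t
      have p1 : 0 ≤ (s * c - t) * (c - cy) := mul_nonneg (by linarith) (by linarith)
      have p2 : 0 < c * (t * (2 * c ^ 2 + 1) - 3 * s * c) := mul_pos hc0 (by linarith)
      have hz2 : t * cy * (c ^ 2 - (s ^ 2 + 1)) = 0 := by rw [hsq]; ring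
      nlinarith [p1, p2, hz2]
  have hΨ := hmono self_mem_Ici (le_of_lt hxy : x ∈ Ici y) hxy
  have hx0 : 0 < x := hy.trans hxy
  have hcx : 0 < Real.cosh x := Real.cosh_pos x
  have hsy : 0 < Real.sinh y := Real.sinh_pos_iff.2 hy
  have e1 : Real.sinh y / (y * cy) + 2 / cy * (Real.sinh y / y) = 3 * Real.sinh y / (y * cy) := by
    field_simp; ring
  have e2 : Real.sinh x / (x * Real.cosh x) + 2 / cy * (Real.sinh x / x)
      = Real.sinh x * (cy + 2 * Real.cosh x) / (x * Real.cosh x * cy) := by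
    field_simp
  simp only [← hcy] at hΨ
  simp only [e1, e2] at hΨ
  rw [div_lt_div_iff₀ (by positivity) (by positivity)] at hΨ
  have h2 : (3 * x * Real.cosh x * Real.sinh y) * cy < (y * Real.sinh x * (2 * Real.cosh x + cy)) * cy := by
    nlinarith [hΨ]
  exact lt_of_mul_lt_mul_right h2 hcy0.le

lemma sqrt3_sq : Real.sqrt 3 * Real.sqrt 3 = 3 := Real.mul_self_sqrt (by norm_num)

lemma d1s (α : ℝ) : delta1 (π/3 - α) = delta2 α := by
  unfold delta1 delta2
  rw [Real.cos_sub, Real.cos_pi_div_three, Real.sin_pi_div_three]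

lemma d2s (α : ℝ) : delta2 (π/3 - α) = delta1 α := by
  unfold delta1 delta2
  rw [Real.cos_sub, Real.sin_sub, Real.cos_pi_div_three, Real.sin_pi_div_three]
  linear_combination (Real.cos α / 4) * sqrt3_sq

lemma d3s (α : ℝ) : delta3 (π/3 - α) = -(delta3 α) := by
  unfold delta3
  rw [Real.cos_sub, Real.sin_sub, Real.cos_pi_div_three, Real.sin_pi_div_three]
  linear_combination (-(Real.cos α) / 4) * sqrt3_sq

lemma gfun_symm (a l α : ℝ) : gfun a (π/3 - α) l = gfun a α l := by
  unfold gfun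
  rw [d1s, d2s, d3s, mul_neg, neg_neg]
  ring

lemma cstar_symm (a α : ℝ) : cstar a (π/3 - α) = cstar a α := by
  have hset : {c : ℝ | ∃ l : ℝ, 0 < l ∧ c = gfun a (π/3 - α) l / l}
      = {c : ℝ | ∃ l : ℝ, 0 < l ∧ c = gfun a α l / l} := by
    ext c
    simp only [mem_setOf_eq, gfun_symm]
  unfold cstar
  rw [hset]

lemma gfun_eq_cosh (a α l : ℝ) :
    gfun a α l = (1/3) * (Real.cosh (l * delta1 α) + Real.cosh (l * delta2 α)
      + Real.cosh (l * delta3 α)) - 1 + a := by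
  unfold gfun
  rw [Real.cosh_eq, Real.cosh_eq, Real.cosh_eq]
  ring

lemma gfun_ge (a α l : ℝ) : a ≤ gfun a α l := by
  rw [gfun_eq_cosh]
  have h1 := Real.one_le_cosh (l * delta1 α)
  have h2 := Real.one_le_cosh (l * delta2 α)
  have h3 := Real.one_le_cosh (l * delta3 α)
  linarith

lemma hasDerivAt_gfun (a l α : ℝ) : HasDerivAt (fun β => gfun a β l)
    ((1/6) * ((Real.exp (l * delta1 α) * (l * (-Real.sin α)) + Real.exp (-(l * delta1 α)) * (-(l * (-Real.sin α))))
      + (Real.exp (l * delta2 α) * (l * (1/2 * (-Real.sin α) + Real.sqrt 3 / 2 * Real.cos α))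
          + Real.exp (-(l * delta2 α)) * (-(l * (1/2 * (-Real.sin α) + Real.sqrt 3 / 2 * Real.cos α))))
      + (Real.exp (l * delta3 α) * (l * (1/2 * (-Real.sin α) - Real.sqrt 3 / 2 * Real.cos α))
          + Real.exp (-(l * delta3 α)) * (-(l * (1/2 * (-Real.sin α) - Real.sqrt 3 / 2 * Real.cos α)))))) α := by
  have hδ1 : HasDerivAt (fun β => delta1 β) (-Real.sin α) α := by
    simpa [delta1] using Real.hasDerivAt_cos α
  have hδ2 : HasDerivAt (fun β => delta2 β) (1/2 * (-Real.sin α) + Real.sqrt 3 / 2 * Real.cos α) α := by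
    exact ((Real.hasDerivAt_cos α).const_mul (1/2 : ℝ)).add
      ((Real.hasDerivAt_sin α).const_mul (Real.sqrt 3 / 2))
  have hδ3 : HasDerivAt (fun β => delta3 β) (1/2 * (-Real.sin α) - Real.sqrt 3 / 2 * Real.cos α) α := by
    exact ((Real.hasDerivAt_cos α).const_mul (1/2 : ℝ)).sub
      ((Real.hasDerivAt_sin α).const_mul (Real.sqrt 3 / 2))
  have t1 := ((hδ1.const_mul l).exp).add (((hδ1.const_mul l).neg).exp)
  have t2 := ((hδ2.const_mul l).exp).add (((hδ2.const_mul l).neg).exp)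
  have t3 := ((hδ3.const_mul l).exp).add (((hδ3.const_mul l).neg).exp)
  have hsum := (((t1.add t2).add t3).const_mul (1/6 : ℝ)).sub_const 1 |>.add_const a
  exact hsum

lemma exp_sub_exp (x : ℝ) : Real.exp x - Real.exp (-x) = 2 * Real.sinh x := by
  rw [Real.sinh_eq]; ring

lemma deriv_gfun_neg (a l : ℝ) (hl : 0 < l) {α : ℝ} (hα : α ∈ Ioo 0 (π/6)) :
    deriv (fun β => gfun a β l) α < 0 := by
  obtain ⟨hα0, hα6⟩ := hα
  have hpi := Real.pi_pos
  rw [(hasDerivAt_gfun a l α).deriv]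
  set u := l * Real.cos α / 2 with hu
  set v := Real.sqrt 3 * l * Real.sin α / 2 with hv
  have hsin : 0 < Real.sin α := Real.sin_pos_of_pos_of_lt_pi hα0 (by linarith)
  have hcos : 0 < Real.cos α := Real.cos_pos_of_mem_Ioo ⟨by linarith, by linarith⟩
  have hs3 : 0 < Real.sqrt 3 := Real.sqrt_pos.2 (by norm_num)
  have hvpos : 0 < v := by rw [hv]; positivity
  have hc3 : 0 < Real.cos α * (1/2) - Real.sin α * (Real.sqrt 3 / 2) := by
    have h := Real.cos_pos_of_mem_Ioo (⟨by linarith, by linarith⟩ : α + π/3 ∈ Ioo (-(π/2)) (π/2))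
    rw [Real.cos_add, Real.cos_pi_div_three, Real.sin_pi_div_three] at h
    linarith
  have huv : v < u := by
    rw [hu, hv]
    nlinarith [mul_pos hl hc3]
  have hcore := my_core hvpos huv
  have h1 : l * delta1 α = u + u := by unfold delta1; rw [hu]; ring
  have h2 : l * delta2 α = u + v := by unfold delta2; rw [hu, hv]; ring
  have h3 : l * delta3 α = u - v := by unfold delta3; rw [hu, hv]; ring
  rw [h1, h2, h3]
  have e1 : Real.exp (u+u) - Real.exp (-(u+u)) = 2*(Real.sinh u * Real.cosh u + Real.cosh u * Real.sinh u) := by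
    rw [exp_sub_exp, Real.sinh_add]
  have e2 : Real.exp (u+v) - Real.exp (-(u+v)) = 2*(Real.sinh u * Real.cosh v + Real.cosh u * Real.sinh v) := by
    rw [exp_sub_exp, Real.sinh_add]
  have e3 : Real.exp (u-v) - Real.exp (-(u-v)) = 2*(Real.sinh u * Real.cosh v - Real.cosh u * Real.sinh v) := by
    rw [exp_sub_exp, Real.sinh_sub]
  have ecos : l * Real.cos α = 2*u := by rw [hu]; ring
  have esin : Real.sqrt 3 * l * Real.sin α = 2*v := by rw [hv]; ring
  set N : ℝ := (-Real.sin α) * (Real.sinh u * Real.cosh u + Real.cosh u * Real.sinh u)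
      + (1/2 * (-Real.sin α) + Real.sqrt 3/2 * Real.cos α) * (Real.sinh u * Real.cosh v + Real.cosh u * Real.sinh v)
      + (1/2 * (-Real.sin α) - Real.sqrt 3/2 * Real.cos α) * (Real.sinh u * Real.cosh v - Real.cosh u * Real.sinh v)
    with hN
  have key : (1/6 : ℝ) * ((Real.exp (u+u) * (l * (-Real.sin α)) + Real.exp (-(u+u)) * (-(l * (-Real.sin α))))
      + (Real.exp (u+v) * (l * (1/2 * (-Real.sin α) + Real.sqrt 3 / 2 * Real.cos α))
          + Real.exp (-(u+v)) * (-(l * (1/2 * (-Real.sin α) + Real.sqrt 3 / 2 * Real.cos α))))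
      + (Real.exp (u-v) * (l * (1/2 * (-Real.sin α) - Real.sqrt 3 / 2 * Real.cos α))
          + Real.exp (-(u-v)) * (-(l * (1/2 * (-Real.sin α) - Real.sqrt 3 / 2 * Real.cos α)))))
      = (l/3) * N := by
    rw [hN]
    linear_combination (l*(-Real.sin α)/6) * e1
      + (l*(1/2 * (-Real.sin α) + Real.sqrt 3/2 * Real.cos α)/6) * e2
      + (l*(1/2 * (-Real.sin α) - Real.sqrt 3/2 * Real.cos α)/6) * e3
  rw [key]
  have hNmul : N * (Real.sqrt 3 * l)
      = 2 * (3*u*Real.cosh u*Real.sinh v - v*Real.sinh u*(2*Real.cosh u + Real.cosh v)) := by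
    rw [hN]
    linear_combination (-(2*Real.sinh u*Real.cosh u + Real.sinh u*Real.cosh v)) * esin
      + (l*Real.cos α*Real.cosh u*Real.sinh v) * sqrt3_sq
      + (3*Real.cosh u*Real.sinh v) * ecos
  have hNneg : N < 0 := by
    have h0 : N * (Real.sqrt 3 * l) < 0 := by rw [hNmul]; linarith [hcore]
    by_contra hc
    push_neg at hc
    exact absurd h0 (not_lt.2 (mul_nonneg hc (mul_pos hs3 hl).le))
  exact mul_neg_of_pos_of_neg (by positivity : (0:ℝ) < l/3) hNneg

lemma gfun_anti (a l : ℝ) (hl : 0 < l) : StrictAntiOn (fun α => gfun a α l) (Icc 0 (π/6)) := by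
  apply strictAntiOn_of_deriv_neg (convex_Icc _ _)
  · apply Continuous.continuousOn
    unfold gfun delta1 delta2 delta3
    fun_prop
  · rw [interior_Icc]
    exact fun α hα => deriv_gfun_neg a l hl hα

lemma cstar_bddBelow (a α : ℝ) (ha : 0 < a) :
    BddBelow {c : ℝ | ∃ l : ℝ, 0 < l ∧ c = gfun a α l / l} := by
  refine ⟨0, ?_⟩
  rintro c ⟨l, hl, rfl⟩
  exact div_nonneg (ha.le.trans (gfun_ge a α l)) hl.le

lemma cstar_le_of_pos (a α l : ℝ) (ha : 0 < a) (hl : 0 < l) : cstar a α ≤ gfun a α l / l :=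
  csInf_le (cstar_bddBelow a α ha) ⟨l, hl, rfl⟩

lemma cstar_attain (a α : ℝ) (ha : 0 < a) (hcos : 1/2 ≤ Real.cos α) :
    ∃ l₀ : ℝ, 0 < l₀ ∧ cstar a α = gfun a α l₀ / l₀ := by
  set f : ℝ → ℝ := fun l => gfun a α l / l with hf
  set M : ℝ := f 1 with hMdef
  have hM : 0 < M := by
    rw [hMdef, hf]
    simp only [div_one]
    exact ha.trans_le (gfun_ge a α 1)
  set ε : ℝ := min 1 (a/(M+1)) with hε
  have hε0 : 0 < ε := lt_min one_pos (div_pos ha (by linarith))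
  have hε1 : ε ≤ 1 := min_le_left _ _
  have hεa : ε ≤ a/(M+1) := min_le_right _ _
  set L : ℝ := 96*(M+2) with hL
  have hL1 : (1:ℝ) ≤ L := by rw [hL]; nlinarith
  have hcont : ContinuousOn f (Icc ε L) := by
    apply ContinuousOn.div
    · apply Continuous.continuousOn
      unfold gfun delta1 delta2 delta3
      fun_prop
    · exact continuous_id.continuousOn
    · exact fun l hl => (hε0.trans_le hl.1).ne'
  have h1mem : (1:ℝ) ∈ Icc ε L := ⟨hε1, hL1⟩
  obtain ⟨l₀, hl₀mem, hmin⟩ := isCompact_Icc.exists_isMinOn ⟨1, h1mem⟩ hcont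
  rw [isMinOn_iff] at hmin
  have hl₀pos : 0 < l₀ := hε0.trans_le hl₀mem.1
  have hminM : f l₀ ≤ M := hmin 1 h1mem
  -- small l
  have hsmall : ∀ l : ℝ, 0 < l → l < ε → M < f l := by
    intro l hl hlε
    have h1 : a / l ≤ f l := by
      show a / l ≤ gfun a α l / l
      gcongr
      exact gfun_ge a α l
    have h2 : M + 1 < a / l := by
      rw [lt_div_iff₀ hl]
      have h3 : l < a/(M+1) := hlε.trans_le hεa
      rw [lt_div_iff₀ (by linarith : (0:ℝ) < M+1)] at h3
      linarith
    linarith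
  -- big l
  have hbig : ∀ l : ℝ, L < l → M < f l := by
    intro l hlL
    have hl1 : (1:ℝ) < l := hL1.trans_lt hlL
    have hl : 0 < l := by linarith
    have hd1 : l/2 ≤ l * delta1 α := by
      unfold delta1; nlinarith
    have hch : Real.cosh (l/2) ≤ Real.cosh (l * delta1 α) := by
      rw [Real.cosh_le_cosh, abs_of_nonneg (by linarith : (0:ℝ) ≤ l/2),
        abs_of_nonneg (by linarith : (0:ℝ) ≤ l * delta1 α)]
      exact hd1
    have hexp4 : 1 + l/4 ≤ Real.exp (l/4) := by
      have := Real.add_one_le_exp (l/4); linarith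
    have hexp : (1 + l/4)^2 ≤ Real.exp (l/2) := by
      have hmul : Real.exp (l/4) * Real.exp (l/4) = Real.exp (l/2) := by
        rw [← Real.exp_add]; ring_nf
      nlinarith [Real.exp_pos (l/4)]
    have hcosh2 : Real.exp (l/2) / 2 ≤ Real.cosh (l/2) := by
      rw [Real.cosh_eq]
      have := Real.exp_pos (-(l/2))
      linarith
    have hcoshl : l^2/32 ≤ Real.cosh (l/2) := by nlinarith
    have hgl : l^2/96 - 1 + a ≤ gfun a α l := by
      rw [gfun_eq_cosh]
      have h2' := Real.one_le_cosh (l * delta2 α)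
      have h3' := Real.one_le_cosh (l * delta3 α)
      nlinarith
    have hfl : (l^2/96 - 1 + a)/l ≤ f l := by
      show (l^2/96 - 1 + a)/l ≤ gfun a α l / l
      gcongr
    have hlast : M < (l^2/96 - 1 + a)/l := by
      rw [lt_div_iff₀ hl]
      have hp : 0 < (l - 96*(M+2)) * l := mul_pos (by rw [hL] at hlL; linarith) hl
      nlinarith
    linarith
  have hglob : ∀ l : ℝ, 0 < l → f l₀ ≤ f l := by
    intro l hl
    rcases lt_or_ge l ε with h | h
    · linarith [hsmall l hl h]
    · rcases le_or_gt l L with h' | h'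
      · exact hmin l ⟨h, h'⟩
      · linarith [hbig l h']
  refine ⟨l₀, hl₀pos, le_antisymm (cstar_le_of_pos a α l₀ ha hl₀pos) ?_⟩
  refine le_csInf ⟨f 1, 1, one_pos, rfl⟩ ?_
  rintro c ⟨l, hl, rfl⟩
  exact hglob l hl

lemma main1 (a : ℝ) (ha : 0 < a) {α₁ α₂ : ℝ} (h0 : 0 ≤ α₁) (h12 : α₁ < α₂) (h26 : α₂ ≤ π/6) :
    cstar a α₂ < cstar a α₁ := by
  have hpi := Real.pi_pos
  have hcos1 : 1/2 ≤ Real.cos α₁ := by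
    have h := Real.cos_le_cos_of_nonneg_of_le_pi h0 (by linarith) (by linarith : α₁ ≤ π/6)
    rw [Real.cos_pi_div_six] at h
    nlinarith [Real.sqrt_nonneg 3, sqrt3_sq]
  obtain ⟨l₀, hl₀, hval⟩ := cstar_attain a α₁ ha hcos1
  have hlt : gfun a α₂ l₀ < gfun a α₁ l₀ := by
    have := gfun_anti a l₀ hl₀ (⟨h0, by linarith⟩ : α₁ ∈ Icc 0 (π/6)) ⟨by linarith, h26⟩ h12
    simpa using this
  have hle : cstar a α₂ ≤ gfun a α₂ l₀ / l₀ := cstar_le_of_pos a α₂ l₀ ha hl₀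
  have hdiv : gfun a α₂ l₀ / l₀ < gfun a α₁ l₀ / l₀ := by gcongr
  rw [hval]
  linarith


theorem stmt8 (a : ℝ) (ha : 0 < a) :
    (∀ α₁ α₂ : ℝ, 0 ≤ α₁ → α₁ < α₂ → α₂ ≤ Real.pi / 6 → cstar a α₂ < cstar a α₁) ∧
    (∀ α₁ α₂ : ℝ, Real.pi / 6 ≤ α₁ → α₁ < α₂ → α₂ ≤ Real.pi / 3 → cstar a α₁ < cstar a α₂) := by
  constructor
  · exact fun α₁ α₂ h0 h12 h26 => main1 a ha h0 h12 h26
  · intro α₁ α₂ h1 h12 h23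
    have e1 : π/3 - (π/3 - α₁) = α₁ := by ring
    have e2 : π/3 - (π/3 - α₂) = α₂ := by ring
    have c1 := cstar_symm a (π/3 - α₁)
    rw [e1] at c1
    have c2 := cstar_symm a (π/3 - α₂)
    rw [e2] at c2
    have h := main1 a ha (α₁ := π/3 - α₂) (α₂ := π/3 - α₁) (by linarith) (by linarith) (by linarith)
    rw [c1, c2]
    exact h
end

section
/- For every λ > 0 and every α ∈ (0, π/6), the following strict inequality holds: sin α·(exp(−λ·cos α) − exp(λ·cos α)) + ((√3/2)·cos α + (1/2)·sin α)·(exp(λ·((√3/2)·sin α − (1/2)·cos α)) − exp(−λ·((√3/2)·sin α − (1/2)·cos α))) + ((√3/2)·cos α − (1/2)·sin α)·(exp(λ·((√3/2)·sin α + (1/2)·cos α)) − exp(−λ·((√3/2)·sin α + (1/2)·cos α))) < 0. (This expression is, up to the positive factor λ/6, the partial derivative with respect to α of the sum of exponentials appearing in the minimal wave speed formula.) -/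
open Real

lemma lem1 (x : ℝ) (hx : 0 < x) : Real.sinh x < x * Real.cosh x := by
  have hd : ∀ y : ℝ, HasDerivAt (fun t : ℝ => t * Real.cosh t - Real.sinh t) (y * Real.sinh y) y := by
    intro y
    have h1 : HasDerivAt (fun t : ℝ => t * Real.cosh t) (1 * Real.cosh y + y * Real.sinh y) y :=
      (hasDerivAt_id y).mul (Real.hasDerivAt_cosh y)
    have := h1.sub (Real.hasDerivAt_sinh y)
    exact this.congr_deriv (by ring)
  have mono : StrictMonoOn (fun t : ℝ => t * Real.cosh t - Real.sinh t) (Set.Ici 0) := by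
    apply strictMonoOn_of_deriv_pos (convex_Ici 0)
    · exact Continuous.continuousOn (by continuity)
    · intro y hy
      rw [interior_Ici] at hy
      rw [(hd y).deriv]
      exact mul_pos hy (Real.sinh_pos_iff.2 hy)
  have := mono Set.self_mem_Ici (Set.mem_Ici.2 hx.le) hx
  simpa using this

lemma lem2 (x : ℝ) (hx : 0 < x) : 2 * Real.cosh x < x * Real.sinh x + 2 := by
  have hd : ∀ y : ℝ, HasDerivAt (fun t : ℝ => t * Real.sinh t + 2 - 2 * Real.cosh t)
      (y * Real.cosh y - Real.sinh y) y := by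
    intro y
    have h1 : HasDerivAt (fun t : ℝ => t * Real.sinh t) (1 * Real.sinh y + y * Real.cosh y) y :=
      (hasDerivAt_id y).mul (Real.hasDerivAt_sinh y)
    have h2 := ((h1.add_const 2).sub ((Real.hasDerivAt_cosh y).const_mul 2))
    exact h2.congr_deriv (by ring)
  have mono : StrictMonoOn (fun t : ℝ => t * Real.sinh t + 2 - 2 * Real.cosh t) (Set.Ici 0) := by
    apply strictMonoOn_of_deriv_pos (convex_Ici 0)
    · exact Continuous.continuousOn (by continuity)
    · intro y hy
      rw [interior_Ici] at hy
      rw [(hd y).deriv]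
      linarith [lem1 y hy]
  have := mono Set.self_mem_Ici (Set.mem_Ici.2 hx.le) hx
  simp at this
  linarith

lemma lemA (x : ℝ) (hx : 0 < x) : 3 * Real.sinh x < x * Real.cosh x + 2 * x := by
  have hd : ∀ y : ℝ, HasDerivAt (fun t : ℝ => t * Real.cosh t + 2 * t - 3 * Real.sinh t)
      (y * Real.sinh y + 2 - 2 * Real.cosh y) y := by
    intro y
    have h1 : HasDerivAt (fun t : ℝ => t * Real.cosh t) (1 * Real.cosh y + y * Real.sinh y) y :=
      (hasDerivAt_id y).mul (Real.hasDerivAt_cosh y)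
    have h2 := (h1.add ((hasDerivAt_id y).const_mul 2)).sub ((Real.hasDerivAt_sinh y).const_mul 3)
    exact h2.congr_deriv (by ring)
  have mono : StrictMonoOn (fun t : ℝ => t * Real.cosh t + 2 * t - 3 * Real.sinh t) (Set.Ici 0) := by
    apply strictMonoOn_of_deriv_pos (convex_Ici 0)
    · exact Continuous.continuousOn (by continuity)
    · intro y hy
      rw [interior_Ici] at hy
      rw [(hd y).deriv]
      linarith [lem2 y hy]
  have := mono Set.self_mem_Ici (Set.mem_Ici.2 hx.le) hx
  simp at this
  linarith


noncomputable def psi (t : ℝ) : ℝ :=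
  3 * Real.log (Real.sinh t) - 3 * Real.log t - Real.log (Real.cosh t)

lemma psi_hasDeriv (t : ℝ) (ht : 0 < t) :
    HasDerivAt psi (3 * (Real.cosh t / Real.sinh t) - 3 * t⁻¹ - Real.sinh t / Real.cosh t) t := by
  have h1 : HasDerivAt (fun s : ℝ => Real.log (Real.sinh s)) (Real.cosh t / Real.sinh t) t :=
    (Real.hasDerivAt_sinh t).log (Real.sinh_pos_iff.2 ht).ne'
  have h2 : HasDerivAt (fun s : ℝ => Real.log s) t⁻¹ t := Real.hasDerivAt_log ht.ne'
  have h3 : HasDerivAt (fun s : ℝ => Real.log (Real.cosh s)) (Real.sinh t / Real.cosh t) t :=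
    (Real.hasDerivAt_cosh t).log (Real.cosh_pos t).ne'
  exact ((h1.const_mul 3).sub (h2.const_mul 3)).sub h3

lemma psi_deriv_pos (t : ℝ) (ht : 0 < t) :
    0 < 3 * (Real.cosh t / Real.sinh t) - 3 * t⁻¹ - Real.sinh t / Real.cosh t := by
  have hs : 0 < Real.sinh t := Real.sinh_pos_iff.2 ht
  have hc : 0 < Real.cosh t := Real.cosh_pos t
  have hsq : Real.sinh t ^ 2 = Real.cosh t ^ 2 - 1 := by
    have := Real.cosh_sq_sub_sinh_sq t
    nlinarith
  have hA := lemA (2 * t) (by linarith)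
  rw [Real.sinh_two_mul, Real.cosh_two_mul] at hA
  have hnum : 0 < 2 * t * Real.cosh t ^ 2 + t - 3 * (Real.sinh t * Real.cosh t) := by
    nlinarith [hA, mul_pos ht (mul_pos hs hs)]
  have heq : 3 * (Real.cosh t / Real.sinh t) - 3 * t⁻¹ - Real.sinh t / Real.cosh t
      = (2 * t * Real.cosh t ^ 2 + t - 3 * (Real.sinh t * Real.cosh t)) / (t * Real.sinh t * Real.cosh t) := by
    field_simp
    linear_combination (-t) * hsq
  rw [heq]
  positivity

lemma lemPow (u v : ℝ) (hv : 0 < v) (hvu : v < u) :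
    Real.sinh v ^ 3 * u ^ 3 * Real.cosh u < Real.sinh u ^ 3 * v ^ 3 * Real.cosh v := by
  have hu : 0 < u := hv.trans hvu
  have mono : StrictMonoOn psi (Set.Ioi 0) := by
    apply strictMonoOn_of_deriv_pos (convex_Ioi 0)
    · intro x hx
      exact (psi_hasDeriv x hx).continuousAt.continuousWithinAt
    · intro x hx
      rw [interior_Ioi] at hx
      rw [(psi_hasDeriv x hx).deriv]
      exact psi_deriv_pos x hx
  have hlt : psi v < psi u := mono (Set.mem_Ioi.2 hv) (Set.mem_Ioi.2 hu) hvu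
  unfold psi at hlt
  have hsv : 0 < Real.sinh v := Real.sinh_pos_iff.2 hv
  have hsu : 0 < Real.sinh u := Real.sinh_pos_iff.2 hu
  have hcv : 0 < Real.cosh v := Real.cosh_pos v
  have hcu : 0 < Real.cosh u := Real.cosh_pos u
  have hL : Real.log (Real.sinh v ^ 3 * u ^ 3 * Real.cosh u)
      < Real.log (Real.sinh u ^ 3 * v ^ 3 * Real.cosh v) := by
    rw [Real.log_mul (by positivity) hcu.ne', Real.log_mul (by positivity) hcv.ne',
      Real.log_mul (by positivity) (by positivity), Real.log_mul (by positivity) (by positivity),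
      Real.log_pow, Real.log_pow, Real.log_pow, Real.log_pow]
    push_cast
    linarith
  exact (Real.log_lt_log_iff (by positivity) (by positivity)).1 hL


lemma keyIneq (u v : ℝ) (hv : 0 < v) (hvu : v < u) :
    3 * u * Real.cosh u * Real.sinh v < v * Real.sinh u * (2 * Real.cosh u + Real.cosh v) := by
  have hu : 0 < u := hv.trans hvu
  set a := Real.sinh u with ha
  set b := Real.sinh v with hb
  set A := Real.cosh u with hA
  set B := Real.cosh v with hB
  have hpa : 0 < a := Real.sinh_pos_iff.2 hu
  have hpb : 0 < b := Real.sinh_pos_iff.2 hv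
  have hpA : 0 < A := Real.cosh_pos u
  have hpB : 0 < B := Real.cosh_pos v
  set X := v * a with hX
  set Y := u * b with hY
  have hpX : 0 < X := mul_pos hv hpa
  have hpY : 0 < Y := mul_pos hu hpb
  have hkey : Y ^ 3 * A < X ^ 3 * B := by
    have := lemPow u v hv hvu
    calc Y ^ 3 * A = b ^ 3 * u ^ 3 * A := by rw [hY]; try ring
    _ < a ^ 3 * v ^ 3 * B := this
    _ = X ^ 3 * B := by rw [hX]; try ring
  -- goal: 3 Y A < X (2A + B)
  have hgoal : 3 * Y * A < X * (2 * A + B) := by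
    rcases le_or_gt (3 * Y) (2 * X) with h | h
    · nlinarith [mul_pos hpX hpB, mul_pos hpX hpA]
    · have h1 : (2 * X - 3 * Y) * (X ^ 3 * B) < (2 * X - 3 * Y) * (Y ^ 3 * A) :=
        mul_lt_mul_of_neg_left hkey (by linarith)
      have h2 : 0 ≤ X * B * ((X - Y) ^ 2 * (2 * X + Y)) := by positivity
      have hY3 : 0 < Y ^ 3 := by positivity
      have key2 : 0 < Y ^ 3 * (X * (2 * A + B) - 3 * Y * A) := by nlinarith [h1, h2]
      by_contra hcon
      push_neg at hcon
      nlinarith [key2, hY3]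
  calc 3 * u * Real.cosh u * Real.sinh v = 3 * Y * A := by rw [hY]; try ring
  _ < X * (2 * A + B) := hgoal
  _ = v * Real.sinh u * (2 * Real.cosh u + Real.cosh v) := by rw [hX]; try ring


theorem stmt11 (l α : ℝ) (hl : 0 < l) (hα : α ∈ Set.Ioo (0:ℝ) (Real.pi/6)) :
    Real.sin α * (Real.exp (-(l * Real.cos α)) - Real.exp (l * Real.cos α))
      + (Real.sqrt 3 / 2 * Real.cos α + 1/2 * Real.sin α) *
        (Real.exp (l * (Real.sqrt 3 / 2 * Real.sin α - 1/2 * Real.cos α))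
          - Real.exp (-(l * (Real.sqrt 3 / 2 * Real.sin α - 1/2 * Real.cos α))))
      + (Real.sqrt 3 / 2 * Real.cos α - 1/2 * Real.sin α) *
        (Real.exp (l * (Real.sqrt 3 / 2 * Real.sin α + 1/2 * Real.cos α))
          - Real.exp (-(l * (Real.sqrt 3 / 2 * Real.sin α + 1/2 * Real.cos α)))) < 0 := by
  obtain ⟨hα0, hα6⟩ := hα
  have hπ := Real.pi_pos
  have hs : 0 < Real.sin α := Real.sin_pos_of_pos_of_lt_pi hα0 (by linarith)
  have hsqrt3 : 0 < Real.sqrt 3 := by positivity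
  have hsq3 : Real.sqrt 3 * Real.sqrt 3 = 3 := Real.mul_self_sqrt (by norm_num)
  have hcos : Real.sqrt 3 / 2 < Real.cos α := by
    rw [← Real.cos_pi_div_six]
    apply Real.cos_lt_cos_of_nonneg_of_le_pi hα0.le (by linarith) hα6
  have hsin : Real.sin α < 1 / 2 := by
    rw [← Real.sin_pi_div_six]
    apply Real.sin_lt_sin_of_lt_of_le_pi_div_two (by linarith) (by linarith) hα6
  set u : ℝ := l * Real.cos α / 2 with hu
  set v : ℝ := Real.sqrt 3 * l * Real.sin α / 2 with hv
  have hv0 : 0 < v := by rw [hv]; positivity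
  have hvu : v < u := by
    rw [hv, hu]
    have h1 : Real.sqrt 3 * Real.sin α < Real.sqrt 3 * (1/2) :=
      mul_lt_mul_of_pos_left hsin hsqrt3
    have h2 : Real.sqrt 3 * Real.sin α < Real.cos α := by
      calc Real.sqrt 3 * Real.sin α < Real.sqrt 3 * (1/2) := h1
      _ = Real.sqrt 3 / 2 := by ring
      _ < Real.cos α := hcos
    nlinarith [h2, hl]
  have key := keyIneq u v hv0 hvu
  -- identity
  have e1 : l * Real.cos α = u + u := by rw [hu]; ring
  have e2 : l * (Real.sqrt 3 / 2 * Real.sin α - 1/2 * Real.cos α) = v - u := by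
    rw [hv, hu]; ring
  have e3 : l * (Real.sqrt 3 / 2 * Real.sin α + 1/2 * Real.cos α) = v + u := by
    rw [hv, hu]; ring
  have hid : Real.sin α * (Real.exp (-(l * Real.cos α)) - Real.exp (l * Real.cos α))
      + (Real.sqrt 3 / 2 * Real.cos α + 1/2 * Real.sin α) *
        (Real.exp (l * (Real.sqrt 3 / 2 * Real.sin α - 1/2 * Real.cos α))
          - Real.exp (-(l * (Real.sqrt 3 / 2 * Real.sin α - 1/2 * Real.cos α))))
      + (Real.sqrt 3 / 2 * Real.cos α - 1/2 * Real.sin α) *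
        (Real.exp (l * (Real.sqrt 3 / 2 * Real.sin α + 1/2 * Real.cos α))
          - Real.exp (-(l * (Real.sqrt 3 / 2 * Real.sin α + 1/2 * Real.cos α))))
      = 2 * (Real.sqrt 3 * Real.cos α * (Real.cosh u * Real.sinh v)
          - Real.sin α * (Real.sinh u * (2 * Real.cosh u + Real.cosh v))) := by
    rw [e1, e2, e3, Real.sinh_eq, Real.sinh_eq, Real.cosh_eq, Real.cosh_eq]
    have hne : Real.exp u ≠ 0 := (Real.exp_pos u).ne'
    have hne2 : Real.exp v ≠ 0 := (Real.exp_pos v).ne'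
    simp only [neg_add, neg_sub, neg_neg, Real.exp_add, Real.exp_sub, Real.exp_neg]
    field_simp
    ring
  rw [hid]
  -- key : 3 u cosh u sinh v < v sinh u (2 cosh u + cosh v) with u = l cos α /2, v = √3 l sin α /2
  have h3 : 3 * Real.cos α * (Real.cosh u * Real.sinh v)
      < Real.sqrt 3 * Real.sin α * (Real.sinh u * (2 * Real.cosh u + Real.cosh v)) := by
    rw [hu, hv] at key
    nlinarith [key, hl]
  have h4 := mul_lt_mul_of_pos_left h3 hsqrt3
  have h5 : Real.sqrt 3 * (Real.sqrt 3 * Real.sin α * (Real.sinh u * (2 * Real.cosh u + Real.cosh v)))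
      = 3 * (Real.sin α * (Real.sinh u * (2 * Real.cosh u + Real.cosh v))) := by
    linear_combination (Real.sin α * (Real.sinh u * (2 * Real.cosh u + Real.cosh v))) * hsq3
  rw [h5] at h4
  linarith [h4]
end

section
/- Let U be a traveling wave with speed c, with c > 0 and U(ξ) > 0 for all ξ ∈ ℝ. Then the ratio U(ξ + δ)/U(ξ) is uniformly bounded: there exists a constant C > 0 such that U(ξ + δ) ≤ C·U(ξ) for all ξ ∈ ℝ and all δ ∈ [−1, 1]. -/
open Real Set Filter

/-- The discrete diffusion operator on the hexagonal lattice, in direction α. -/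
noncomputable def Dh (α : ℝ) (U : ℝ → ℝ) (ξ : ℝ) : ℝ :=
  (U (ξ + delta1 α) + U (ξ - delta1 α)) + (U (ξ + delta2 α) + U (ξ - delta2 α))
    + (U (ξ + delta3 α) + U (ξ - delta3 α)) - 6 * U ξ

/-- Fisher-KPP conditions: f is C¹ on [0,1] with derivative f', f(0)=f(1)=0, f'(0)>0,
and 0 < f(s) ≤ f'(0)·s on (0,1). -/
def FisherKPP (f f' : ℝ → ℝ) : Prop :=
  (∀ s ∈ Set.Icc (0:ℝ) 1, HasDerivAt f (f' s) s) ∧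
  ContinuousOn f' (Set.Icc (0:ℝ) 1) ∧
  f 0 = 0 ∧ f 1 = 0 ∧ 0 < f' 0 ∧
  (∀ s ∈ Set.Ioo (0:ℝ) 1, 0 < f s ∧ f s ≤ f' 0 * s)

/-- A traveling wave with speed c: a C¹ function U : ℝ → [0,1] solving
c·U′ = (1/6)·𝒟_h[U] + f(U) with limits 0 at −∞ and 1 at +∞. -/
def IsTravelingWave (α : ℝ) (f : ℝ → ℝ) (c : ℝ) (U : ℝ → ℝ) : Prop :=
  ContDiff ℝ 1 U ∧ (∀ ξ, U ξ ∈ Set.Icc (0:ℝ) 1) ∧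
  (∀ ξ, c * deriv U ξ = (1/6) * Dh α U ξ + f (U ξ)) ∧
  Filter.Tendsto U Filter.atBot (nhds 0) ∧ Filter.Tendsto U Filter.atTop (nhds 1)

set_option maxHeartbeats 1000000 in
theorem stmt12 (α : ℝ) (f f' : ℝ → ℝ) (hf : FisherKPP f f')
    (c : ℝ) (U : ℝ → ℝ) (hU : IsTravelingWave α f c U)
    (hc : 0 < c) (hUpos : ∀ ξ : ℝ, 0 < U ξ) :
    ∃ C : ℝ, 0 < C ∧ ∀ ξ : ℝ, ∀ δ ∈ Set.Icc (-1 : ℝ) 1, U (ξ + δ) ≤ C * U ξ := by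
  obtain ⟨hC1, hrange, heq, hbot, htop⟩ := hU
  obtain ⟨hder, hcont, hf0, hf1, hfp, hIoo⟩ := hf
  have hUd : Differentiable ℝ U := hC1.differentiable one_ne_zero
  -- f (U ξ) is nonnegative
  have hfnn : ∀ ξ, 0 ≤ f (U ξ) := by
    intro ξ
    rcases hrange ξ with ⟨h0, h1⟩
    rcases eq_or_lt_of_le h0 with h | h
    · rw [← h, hf0]
    rcases eq_or_lt_of_le h1 with h' | h'
    · rw [h', hf1]
    · exact (hIoo _ ⟨h, h'⟩).1.le
  -- choose a shift D among the six lattice shifts with 1/2 ≤ D ≤ 1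
  have hs3 : Real.sqrt 3 ^ 2 = 3 := Real.sq_sqrt (by norm_num)
  have hpy := Real.sin_sq_add_cos_sq α
  have hsum : delta1 α ^ 2 + delta2 α ^ 2 + delta3 α ^ 2 = 3 / 2 := by
    simp only [delta1, delta2, delta3]; nlinarith [hs3, hpy]
  have hb1 : delta1 α ^ 2 ≤ 1 := by
    simp only [delta1]; nlinarith [hpy, sq_nonneg (Real.sin α)]
  have hb2 : delta2 α ^ 2 ≤ 1 := by
    simp only [delta2]
    nlinarith [hs3, hpy, sq_nonneg (Real.sqrt 3 / 2 * Real.cos α - 1 / 2 * Real.sin α)]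
  have hb3 : delta3 α ^ 2 ≤ 1 := by
    simp only [delta3]
    nlinarith [hs3, hpy, sq_nonneg (Real.sqrt 3 / 2 * Real.cos α + 1 / 2 * Real.sin α)]
  have hD : ∃ D : ℝ, (1/2 : ℝ) ≤ D ∧ D ≤ 1 ∧
      (D = delta1 α ∨ D = -delta1 α ∨ D = delta2 α ∨ D = -delta2 α ∨
        D = delta3 α ∨ D = -delta3 α) := by
    rcases le_total (1/2 : ℝ) (delta1 α) with g1 | g1
    · exact ⟨delta1 α, g1, by nlinarith [hb1, sq_nonneg (delta1 α - 1)], Or.inl rfl⟩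
    rcases le_total (delta1 α) (-(1/2) : ℝ) with g1' | g1'
    · exact ⟨-delta1 α, by linarith, by nlinarith [hb1, sq_nonneg (delta1 α + 1)], Or.inr (Or.inl rfl)⟩
    rcases le_total (1/2 : ℝ) (delta2 α) with g2 | g2
    · exact ⟨delta2 α, g2, by nlinarith [hb2, sq_nonneg (delta2 α - 1)], Or.inr (Or.inr (Or.inl rfl))⟩
    rcases le_total (delta2 α) (-(1/2) : ℝ) with g2' | g2'
    · exact ⟨-delta2 α, by linarith, by nlinarith [hb2, sq_nonneg (delta2 α + 1)], Or.inr (Or.inr (Or.inr (Or.inl rfl)))⟩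
    rcases le_total (1/2 : ℝ) (delta3 α) with g3 | g3
    · exact ⟨delta3 α, g3, by nlinarith [hb3, sq_nonneg (delta3 α - 1)], Or.inr (Or.inr (Or.inr (Or.inr (Or.inl rfl))))⟩
    rcases le_total (delta3 α) (-(1/2) : ℝ) with g3' | g3'
    · exact ⟨-delta3 α, by linarith, by nlinarith [hb3, sq_nonneg (delta3 α + 1)],
        Or.inr (Or.inr (Or.inr (Or.inr (Or.inr rfl))))⟩
    exfalso
    have q1 : delta1 α ^ 2 ≤ 1/4 := by nlinarith [mul_nonneg (by linarith : (0:ℝ) ≤ 1/2 - delta1 α) (by linarith : (0:ℝ) ≤ delta1 α + 1/2)]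
    have q2 : delta2 α ^ 2 ≤ 1/4 := by nlinarith [mul_nonneg (by linarith : (0:ℝ) ≤ 1/2 - delta2 α) (by linarith : (0:ℝ) ≤ delta2 α + 1/2)]
    have q3 : delta3 α ^ 2 ≤ 1/4 := by nlinarith [mul_nonneg (by linarith : (0:ℝ) ≤ 1/2 - delta3 α) (by linarith : (0:ℝ) ≤ delta3 α + 1/2)]
    linarith [hsum]
  obtain ⟨D, hDhalf, hDone, hDcases⟩ := hD
  -- key pointwise inequality
  have hkey : ∀ ξ : ℝ, U (ξ + D) ≤ 6 * c * deriv U ξ + 6 * U ξ := by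
    intro ξ
    have hDh : Dh α U ξ ≤ 6 * c * deriv U ξ := by
      have := heq ξ; have := hfnn ξ; linarith
    unfold Dh at hDh
    have p1 := hUpos (ξ + delta1 α); have p2 := hUpos (ξ - delta1 α)
    have p3 := hUpos (ξ + delta2 α); have p4 := hUpos (ξ - delta2 α)
    have p5 := hUpos (ξ + delta3 α); have p6 := hUpos (ξ - delta3 α)
    rcases hDcases with h | h | h | h | h | h
    · have he : ξ + D = ξ + delta1 α := by rw [h]
      rw [he]; linarith
    · have he : ξ + D = ξ - delta1 α := by rw [h]; ring
      rw [he]; linarith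
    · have he : ξ + D = ξ + delta2 α := by rw [h]
      rw [he]; linarith
    · have he : ξ + D = ξ - delta2 α := by rw [h]; ring
      rw [he]; linarith
    · have he : ξ + D = ξ + delta3 α := by rw [h]
      rw [he]; linarith
    · have he : ξ + D = ξ - delta3 α := by rw [h]; ring
      rw [he]; linarith
  -- the exponentially weighted function V
  obtain ⟨V, hVdef⟩ : ∃ V : ℝ → ℝ, V = fun ξ => Real.exp (ξ / c) * U ξ := ⟨_, rfl⟩
  have hVd : ∀ ξ : ℝ, HasDerivAt V (Real.exp (ξ / c) * (U ξ / c + deriv U ξ)) ξ := by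
    intro ξ
    rw [hVdef]
    have h1 : HasDerivAt (fun ξ : ℝ => Real.exp (ξ / c)) (Real.exp (ξ / c) * (1 / c)) ξ := by
      have := ((hasDerivAt_id ξ).div_const c).exp
      simpa using this
    have h2 : HasDerivAt U (deriv U ξ) ξ := (hUd ξ).hasDerivAt
    have : HasDerivAt (fun y => Real.exp (y / c) * U y) (Real.exp (ξ / c) * (1 / c) * U ξ + Real.exp (ξ / c) * deriv U ξ) ξ := h1.mul h2
    convert this using 1
    ring
  have hderivV : ∀ ξ : ℝ, deriv V ξ = Real.exp (ξ / c) * (U ξ / c + deriv U ξ) :=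
    fun ξ => (hVd ξ).deriv
  have hVpos : ∀ ξ : ℝ, 0 < V ξ := fun ξ => hVdef ▸ mul_pos (Real.exp_pos _) (hUpos ξ)
  have hVnn : ∀ ξ : ℝ, 0 ≤ U ξ / c + deriv U ξ := by
    intro ξ
    have h1 := hkey ξ
    have h2 := (hUpos (ξ + D)).le
    have h3 : 0 ≤ U ξ + c * deriv U ξ := by linarith
    have : U ξ / c + deriv U ξ = (U ξ + c * deriv U ξ) / c := by field_simp
    rw [this]; exact div_nonneg h3 hc.le
  have hVmono : Monotone V :=
    monotone_of_deriv_nonneg (fun ξ => (hVd ξ).differentiableAt)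
      (fun ξ => by rw [hderivV]; exact mul_nonneg (Real.exp_pos _).le (hVnn ξ))
  obtain ⟨K, hKdef⟩ : ∃ K : ℝ, K = 24 * c * Real.exp (1 / c) := ⟨_, rfl⟩
  have hK : 0 < K := by rw [hKdef]; positivity
  -- one step estimate
  have hstep : ∀ x : ℝ, V (x + D) ≤ K * V (x + 4⁻¹) := by
    intro x
    obtain ⟨m, hmdef⟩ : ∃ m : ℝ, m = V (x + D) / (6 * c * Real.exp (D / c)) := ⟨_, rfl⟩
    have hm : 0 < m := hmdef ▸ div_pos (hVpos _) (by positivity)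
    obtain ⟨W, hWdef⟩ : ∃ W : ℝ → ℝ, W = fun ξ => V ξ - m * ξ := ⟨_, rfl⟩
    have hWd : ∀ ξ : ℝ, HasDerivAt W (Real.exp (ξ / c) * (U ξ / c + deriv U ξ) - m) ξ := by
      intro ξ
      rw [hWdef]
      have hm' : HasDerivAt (fun ξ : ℝ => m * ξ) m ξ := by
        simpa using (hasDerivAt_id ξ).const_mul m
      exact (hVd ξ).sub hm'
    have hWmono : MonotoneOn W (Set.Ici x) := by
      apply monotoneOn_of_deriv_nonneg (convex_Ici x)
        (fun ξ _ => ((hWd ξ).continuousAt).continuousWithinAt)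
        (fun ξ _ => ((hWd ξ).differentiableAt).differentiableWithinAt)
      intro ξ hξ
      rw [interior_Ici] at hξ
      rw [(hWd ξ).deriv]
      have h1 : U (ξ + D) / (6 * c) ≤ U ξ / c + deriv U ξ := by
        have := hkey ξ
        rw [div_le_iff₀ (by positivity : (0:ℝ) < 6 * c)]
        have hUc : U ξ / c * (6 * c) = 6 * U ξ := by field_simp
        nlinarith [hkey ξ]
      have h2 : Real.exp (ξ / c) * (U (ξ + D) / (6 * c)) ≤
          Real.exp (ξ / c) * (U ξ / c + deriv U ξ) :=
        mul_le_mul_of_nonneg_left h1 (Real.exp_pos _).le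
      have hE : Real.exp ((ξ + D) / c) = Real.exp (ξ / c) * Real.exp (D / c) := by
        rw [← Real.exp_add]; congr 1; ring
      have key2 : V (ξ + D) / (6 * c * Real.exp (D / c)) =
          Real.exp (ξ / c) * (U (ξ + D) / (6 * c)) := by
        simp only [hVdef]
        rw [hE]
        rw [div_eq_iff (by positivity : (6 * c * Real.exp (D / c) : ℝ) ≠ 0)]
        field_simp
      have h4 : m ≤ Real.exp (ξ / c) * (U (ξ + D) / (6 * c)) := by
        have h5 : V (x + D) ≤ V (ξ + D) := hVmono (by linarith [(Set.mem_Ioi.mp hξ).le] : x + D ≤ ξ + D)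
        rw [← key2, hmdef]
        exact (div_le_div_iff_of_pos_right (by positivity)).mpr h5
      linarith
    have hWle : W x ≤ W (x + 4⁻¹) :=
      hWmono Set.self_mem_Ici (Set.mem_Ici.mpr (by linarith)) (by linarith)
    have hVx : 0 < V x := hVpos x
    have h6 : m * 4⁻¹ ≤ V (x + 4⁻¹) := by
      simp only [hWdef] at hWle
      nlinarith
    -- unfold m
    have h7 : V (x + D) = m * (6 * c * Real.exp (D / c)) := by
      rw [hmdef]; field_simp
    rw [h7]
    have h8 : Real.exp (D / c) ≤ Real.exp (1 / c) := by
      exact Real.exp_le_exp.mpr ((div_le_div_iff_of_pos_right hc).mpr hDone)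
    have h9 : m * (6 * c * Real.exp (D / c)) ≤ m * (6 * c * Real.exp (1 / c)) := by
      apply mul_le_mul_of_nonneg_left _ hm.le
      have : (0:ℝ) < 6 * c := by positivity
      nlinarith
    refine h9.trans ?_
    rw [hKdef]
    nlinarith [h6, hm, Real.exp_pos (1/c), hVpos (x + 4⁻¹)]
  -- shift by σ = D - 1/4
  obtain ⟨σ, hσdef⟩ : ∃ σ : ℝ, σ = D - 4⁻¹ := ⟨_, rfl⟩
  have hσ : (4⁻¹ : ℝ) ≤ σ := by rw [hσdef]; linarith
  have hshift : ∀ y : ℝ, V (y + σ) ≤ K * V y := by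
    intro y
    have := hstep (y - 4⁻¹)
    have e1 : y - 4⁻¹ + D = y + σ := by rw [hσdef]; ring
    have e2 : y - 4⁻¹ + 4⁻¹ = y := by ring
    rw [e1, e2] at this
    exact this
  have hone : ∀ y : ℝ, V (y + 1) ≤ K ^ 4 * V y := by
    intro y
    have a1 := hshift y
    have a2 := hshift (y + σ)
    have a3 := hshift (y + σ + σ)
    have a4 := hshift (y + σ + σ + σ)
    have b2 : V (y + σ + σ) ≤ K ^ 2 * V y := by
      calc V (y + σ + σ) ≤ K * V (y + σ) := a2
        _ ≤ K * (K * V y) := mul_le_mul_of_nonneg_left a1 hK.le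
        _ = K ^ 2 * V y := by ring
    have b3 : V (y + σ + σ + σ) ≤ K ^ 3 * V y := by
      calc V (y + σ + σ + σ) ≤ K * V (y + σ + σ) := a3
        _ ≤ K * (K ^ 2 * V y) := mul_le_mul_of_nonneg_left b2 hK.le
        _ = K ^ 3 * V y := by ring
    have b4 : V (y + σ + σ + σ + σ) ≤ K ^ 4 * V y := by
      calc V (y + σ + σ + σ + σ) ≤ K * V (y + σ + σ + σ) := a4
        _ ≤ K * (K ^ 3 * V y) := mul_le_mul_of_nonneg_left b3 hK.le
        _ = K ^ 4 * V y := by ring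
    have hmono : V (y + 1) ≤ V (y + σ + σ + σ + σ) := hVmono (by linarith)
    linarith
  -- conclusion
  refine ⟨K ^ 4 * Real.exp (1 / c), by positivity, ?_⟩
  intro ξ δ hδ
  obtain ⟨hδ1, hδ2⟩ := hδ
  have h1 : V (ξ + δ) ≤ V (ξ + 1) := hVmono (by linarith)
  have h2 : V (ξ + 1) ≤ K ^ 4 * V ξ := hone ξ
  have h3 : Real.exp ((ξ + δ) / c) * U (ξ + δ) ≤ K ^ 4 * (Real.exp (ξ / c) * U ξ) := by
    have := h1.trans h2
    simpa [hVdef] using this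
  have hexp : Real.exp (ξ / c) ≤ Real.exp ((ξ + δ) / c) * Real.exp (1 / c) := by
    rw [← Real.exp_add]
    apply Real.exp_le_exp.mpr
    rw [← add_div]
    exact (div_le_div_iff_of_pos_right hc).mpr (by linarith)
  have hE : 0 < Real.exp ((ξ + δ) / c) := Real.exp_pos _
  rw [← mul_le_mul_iff_right₀ hE]
  calc Real.exp ((ξ + δ) / c) * U (ξ + δ) ≤ K ^ 4 * (Real.exp (ξ / c) * U ξ) := h3
    _ ≤ K ^ 4 * (Real.exp ((ξ + δ) / c) * Real.exp (1 / c) * U ξ) := by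
        apply mul_le_mul_of_nonneg_left _ (by positivity)
        exact mul_le_mul_of_nonneg_right hexp (hUpos ξ).le
    _ = Real.exp ((ξ + δ) / c) * (K ^ 4 * Real.exp (1 / c) * U ξ) := by ring
end

section
/- Let U be a traveling wave with speed c, with c > 0. Then the function ξ ↦ U(ξ)·exp(ξ/c) is nondecreasing on ℝ; equivalently, U(ξ − δ) ≤ exp(δ/c)·U(ξ) for all ξ ∈ ℝ and all δ ≥ 0. -/
open Real Set Filter

theorem stmt13 (α : ℝ) (f f' : ℝ → ℝ) (hf : FisherKPP f f')
    (c : ℝ) (U : ℝ → ℝ) (hU : IsTravelingWave α f c U) (hc : 0 < c) :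
    Monotone (fun ξ : ℝ => U ξ * Real.exp (ξ / c)) ∧
    (∀ ξ : ℝ, ∀ δ : ℝ, 0 ≤ δ → U (ξ - δ) ≤ Real.exp (δ / c) * U ξ) := by
  obtain ⟨hC1, hrange, heq, -, -⟩ := hU
  obtain ⟨hfd, hf'c, hf0, hf1, hfp, hfs⟩ := hf
  have hfU : ∀ ξ, 0 ≤ f (U ξ) := by
    intro ξ
    rcases eq_or_lt_of_le (hrange ξ).1 with h0 | h0
    · rw [← h0, hf0]
    rcases eq_or_lt_of_le (hrange ξ).2 with h1 | h1
    · rw [h1, hf1]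
    · exact (hfs _ ⟨h0, h1⟩).1.le
  have key : ∀ ξ, 0 ≤ c * deriv U ξ + U ξ := by
    intro ξ
    have h1 := (hrange (ξ + delta1 α)).1
    have h2 := (hrange (ξ - delta1 α)).1
    have h3 := (hrange (ξ + delta2 α)).1
    have h4 := (hrange (ξ - delta2 α)).1
    have h5 := (hrange (ξ + delta3 α)).1
    have h6 := (hrange (ξ - delta3 α)).1
    have hE : c * deriv U ξ + U ξ = (1/6) * ((U (ξ + delta1 α) + U (ξ - delta1 α))
        + (U (ξ + delta2 α) + U (ξ - delta2 α)) + (U (ξ + delta3 α) + U (ξ - delta3 α)))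
        + f (U ξ) := by
      have := heq ξ
      unfold Dh at this
      linarith
    have := hfU ξ
    rw [hE]; linarith
  have hdiff : ∀ ξ : ℝ, HasDerivAt (fun ξ => U ξ * Real.exp (ξ / c))
      (deriv U ξ * Real.exp (ξ / c) + U ξ * (Real.exp (ξ / c) * (1 / c))) ξ := by
    intro ξ
    have h1 : HasDerivAt U (deriv U ξ) ξ :=
      ((hC1.differentiable one_ne_zero) ξ).hasDerivAt
    have h2 : HasDerivAt (fun ξ : ℝ => Real.exp (ξ / c)) (Real.exp (ξ / c) * (1 / c)) ξ := by
      have hd : HasDerivAt (fun ξ : ℝ => ξ / c) (1 / c) ξ := by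
        simpa using (hasDerivAt_id ξ).div_const c
      exact (Real.hasDerivAt_exp (ξ / c)).comp ξ hd
    exact h1.mul h2
  have hmono : Monotone (fun ξ : ℝ => U ξ * Real.exp (ξ / c)) := by
    apply monotone_of_deriv_nonneg
    · exact fun ξ => (hdiff ξ).differentiableAt
    · intro ξ
      rw [(hdiff ξ).deriv]
      have hEq : deriv U ξ * Real.exp (ξ / c) + U ξ * (Real.exp (ξ / c) * (1 / c))
          = ((c * deriv U ξ + U ξ) / c) * Real.exp (ξ / c) := by
        field_simp
      rw [hEq]
      exact mul_nonneg (div_nonneg (key ξ) hc.le) (Real.exp_pos _).le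
  refine ⟨hmono, fun ξ δ hδ => ?_⟩
  have hm := hmono (show ξ - δ ≤ ξ by linarith)
  simp only at hm
  have hexp : (0:ℝ) < Real.exp ((ξ - δ) / c) := Real.exp_pos _
  have hsplit : Real.exp (ξ / c) = Real.exp (δ / c) * Real.exp ((ξ - δ) / c) := by
    rw [← Real.exp_add]
    congr 1
    field_simp
    ring
  rw [hsplit] at hm
  have : U (ξ - δ) * Real.exp ((ξ - δ) / c)
      ≤ (Real.exp (δ / c) * U ξ) * Real.exp ((ξ - δ) / c) := by linarith [hm]
  exact le_of_mul_le_mul_right this hexp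
end

section
/- Let U be a traveling wave with speed c. Then the function ξ ↦ f(U(ξ)) is Lebesgue integrable on ℝ and c = ∫_{−∞}^{+∞} f(U(ξ)) dξ; in particular c > 0. -/
open Real Set Filter

open Real Set Filter MeasureTheory intervalIntegral

lemma shiftInt_atTop {U : ℝ → ℝ} (hc : Continuous U) {L : ℝ}
    (h : Tendsto U atTop (nhds L)) (δ : ℝ) :
    Tendsto (fun R : ℝ => ∫ ξ in R..(R+δ), U ξ) atTop (nhds (δ * L)) := by
  rw [Metric.tendsto_atTop]
  intro ε hε
  set ε' : ℝ := ε / (2 * (|δ| + 1)) with hε'def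
  have hε' : 0 < ε' := by positivity
  obtain ⟨M, hM⟩ := Metric.tendsto_atTop.mp h ε' hε'
  refine ⟨M + |δ|, fun R hR => ?_⟩
  have hci : IntervalIntegrable U volume R (R+δ) := hc.intervalIntegrable _ _
  have hconst : ∫ _ in R..(R+δ), (L:ℝ) = δ * L := by
    rw [intervalIntegral.integral_const, smul_eq_mul]; ring
  have hsub : (∫ ξ in R..(R+δ), U ξ) - δ * L = ∫ ξ in R..(R+δ), (U ξ - L) := by
    rw [intervalIntegral.integral_sub hci (intervalIntegrable_const), hconst]
  have hbound : ‖∫ ξ in R..(R+δ), (U ξ - L)‖ ≤ ε' * |(R+δ) - R| := by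
    apply intervalIntegral.norm_integral_le_of_norm_le_const
    intro x hx
    have hx1 : min R (R+δ) < x := hx.1
    have hmin : M ≤ min R (R+δ) := by
      rcases abs_cases δ with ⟨h1, h2⟩ | ⟨h1, h2⟩ <;>
        simp only [le_min_iff] <;> constructor <;> linarith
    have := hM x (le_of_lt (lt_of_le_of_lt hmin hx1))
    rw [Real.dist_eq] at this
    exact le_of_lt (by simpa [Real.norm_eq_abs] using this)
  rw [Real.dist_eq, ← Real.norm_eq_abs, hsub]
  have habs : |(R+δ) - R| = |δ| := by ring_nf
  have hd : (0:ℝ) < |δ| + 1 := by positivity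
  have hhalf : ε' * (|δ| + 1) = ε / 2 := by
    rw [hε'def, div_mul_eq_mul_div, div_eq_div_iff (by positivity) (by norm_num)]; ring
  calc ‖∫ ξ in R..(R+δ), (U ξ - L)‖ ≤ ε' * |(R+δ) - R| := hbound
    _ ≤ ε' * (|δ| + 1) := by rw [habs]; nlinarith
    _ < ε := by rw [hhalf]; linarith

lemma shiftInt_atBot {U : ℝ → ℝ} (hc : Continuous U) {L : ℝ}
    (h : Tendsto U atBot (nhds L)) (δ : ℝ) :
    Tendsto (fun R : ℝ => ∫ ξ in R..(R+δ), U ξ) atBot (nhds (δ * L)) := by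
  have hVc : Continuous (fun x : ℝ => U (-x)) := hc.comp continuous_neg
  have hV : Tendsto (fun x : ℝ => U (-x)) atTop (nhds L) := h.comp tendsto_neg_atTop_atBot
  have hG := ((shiftInt_atTop hVc hV (-δ)).comp tendsto_neg_atBot_atTop).neg
  have hre : ∀ R : ℝ, ∫ ξ in R..(R+δ), U ξ = -(∫ ξ in (-R)..(-R + -δ), U (-ξ)) := by
    intro R
    have h1 : (∫ ξ in (-R)..(-R + -δ), U (-ξ)) = ∫ x in (R+δ)..R, U x := by
      rw [show (-R + -δ : ℝ) = -(R+δ) by ring, intervalIntegral.integral_comp_neg]; rw [neg_neg, neg_neg]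
    rw [h1, intervalIntegral.integral_symm]
  have : (fun R : ℝ => ∫ ξ in R..(R+δ), U ξ)
      = fun R : ℝ => -(∫ ξ in (-R)..(-R + -δ), U (-ξ)) := funext hre
  rw [this, show δ * L = -(-δ * L) by ring]
  exact hG

theorem stmt14 (α : ℝ) (f f' : ℝ → ℝ) (hf : FisherKPP f f')
    (c : ℝ) (U : ℝ → ℝ) (hU : IsTravelingWave α f c U) :
    MeasureTheory.Integrable (fun ξ : ℝ => f (U ξ)) ∧
    c = ∫ ξ : ℝ, f (U ξ) ∧ 0 < c := by
  obtain ⟨hC1, hrange, heq, hbot, htop⟩ := hU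
  set g : ℝ → ℝ := fun ξ => f (U ξ) with hgdef
  have hUc : Continuous U := hC1.continuous
  have hgc : Continuous g := by
    rw [continuous_iff_continuousAt]
    exact fun ξ => ((hf.1 _ (hrange ξ)).continuousAt).comp hUc.continuousAt
  have hg0 : ∀ ξ, 0 ≤ g ξ := by
    intro ξ
    rcases eq_or_lt_of_le (hrange ξ).1 with h0 | h0
    · simp [hgdef, ← h0, hf.2.2.1]
    rcases eq_or_lt_of_le (hrange ξ).2 with h1 | h1
    · simp [hgdef, h1, hf.2.2.2.1]
    · exact le_of_lt (hf.2.2.2.2.2 _ ⟨h0, h1⟩).1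
  have hdc : Continuous (deriv U) := hC1.continuous_deriv le_rfl
  have hint : ∀ a b : ℝ, IntervalIntegrable U MeasureTheory.volume a b :=
    fun a b => hUc.intervalIntegrable a b
  have hintS : ∀ (δ a b : ℝ),
      IntervalIntegrable (fun ξ => U (ξ + δ)) MeasureTheory.volume a b :=
    fun δ a b => (hUc.comp (continuous_id.add continuous_const)).intervalIntegrable a b
  -- boundary difference function
  set B : ℝ → ℝ → ℝ := fun δ R =>
    (∫ ξ in R..(R+δ), U ξ) - (∫ ξ in (-R)..(-R+δ), U ξ) with hBdef
  have shift : ∀ (δ R : ℝ), (∫ ξ in (-R)..R, U (ξ + δ))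
      = (∫ ξ in (-R)..R, U ξ) + B δ R := by
    intro δ R
    rw [intervalIntegral.integral_comp_add_right]
    rw [← intervalIntegral.integral_add_adjacent_intervals (hint (-R+δ) R) (hint R (R+δ)),
        ← intervalIntegral.integral_add_adjacent_intervals (hint (-R+δ) (-R)) (hint (-R) R),
        intervalIntegral.integral_symm (-R) (-R+δ)]
    simp [hBdef]; ring
  have hDhc : Continuous (Dh α U) := by
    unfold Dh
    fun_prop
  have keyDh : ∀ R : ℝ, (∫ ξ in (-R)..R, Dh α U ξ)
      = B (delta1 α) R + B (-(delta1 α)) R + B (delta2 α) R + B (-(delta2 α)) R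
        + B (delta3 α) R + B (-(delta3 α)) R := by
    intro R
    have i1 : IntervalIntegrable (fun ξ => U (ξ + delta1 α)) MeasureTheory.volume (-R) R :=
      hintS _ _ _
    have i2 : IntervalIntegrable (fun ξ => U (ξ + -(delta1 α))) MeasureTheory.volume (-R) R :=
      hintS _ _ _
    have i3 : IntervalIntegrable (fun ξ => U (ξ + delta2 α)) MeasureTheory.volume (-R) R :=
      hintS _ _ _
    have i4 : IntervalIntegrable (fun ξ => U (ξ + -(delta2 α))) MeasureTheory.volume (-R) R :=
      hintS _ _ _
    have i5 : IntervalIntegrable (fun ξ => U (ξ + delta3 α)) MeasureTheory.volume (-R) R :=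
      hintS _ _ _
    have i6 : IntervalIntegrable (fun ξ => U (ξ + -(delta3 α))) MeasureTheory.volume (-R) R :=
      hintS _ _ _
    have i7 : IntervalIntegrable (fun ξ => (6:ℝ) * U ξ) MeasureTheory.volume (-R) R :=
      (hint (-R) R).const_mul 6
    have hcongr : (∫ ξ in (-R)..R, Dh α U ξ) = ∫ ξ in (-R)..R,
        ((U (ξ + delta1 α) + U (ξ + -(delta1 α))) + (U (ξ + delta2 α) + U (ξ + -(delta2 α)))
          + (U (ξ + delta3 α) + U (ξ + -(delta3 α))) - 6 * U ξ) :=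
      intervalIntegral.integral_congr fun ξ _ => by simp [Dh, sub_eq_add_neg]
    rw [hcongr,
        intervalIntegral.integral_sub (((i1.add i2).add (i3.add i4)).add (i5.add i6)) i7,
        intervalIntegral.integral_add ((i1.add i2).add (i3.add i4)) (i5.add i6),
        intervalIntegral.integral_add (i1.add i2) (i3.add i4),
        intervalIntegral.integral_add i1 i2, intervalIntegral.integral_add i3 i4,
        intervalIntegral.integral_add i5 i6, intervalIntegral.integral_const_mul]
    rw [shift, shift, shift, shift, shift, shift]
    ring
  have key : ∀ R : ℝ, (∫ ξ in (-R)..R, g ξ)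
      = c * (U R - U (-R)) - (1/6) * (∫ ξ in (-R)..R, Dh α U ξ) := by
    intro R
    have hcongr : (∫ ξ in (-R)..R, g ξ)
        = ∫ ξ in (-R)..R, (c * deriv U ξ - (1/6) * Dh α U ξ) :=
      intervalIntegral.integral_congr fun ξ _ => by
        have := heq ξ; simp only [hgdef]; linarith
    rw [hcongr,
      intervalIntegral.integral_sub ((hdc.intervalIntegrable _ _).const_mul c)
        ((hDhc.intervalIntegrable _ _).const_mul (1/6)),
      intervalIntegral.integral_const_mul, intervalIntegral.integral_const_mul,
      intervalIntegral.integral_deriv_eq_sub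
        (fun x _ => hC1.differentiable one_ne_zero x)
        (hdc.intervalIntegrable _ _)]
  -- limits of boundary terms
  have hBtend : ∀ δ : ℝ, Tendsto (fun R : ℝ => B δ R) atTop (nhds δ) := by
    intro δ
    have h1 : Tendsto (fun R : ℝ => ∫ ξ in R..(R+δ), U ξ) atTop (nhds (δ * 1)) :=
      shiftInt_atTop hUc htop δ
    have h2 : Tendsto (fun R : ℝ => ∫ ξ in (-R)..(-R+δ), U ξ) atTop (nhds (δ * 0)) :=
      (shiftInt_atBot hUc hbot δ).comp tendsto_neg_atTop_atBot
    have := h1.sub h2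
    simpa using this
  have hDhTend : Tendsto (fun R : ℝ => ∫ ξ in (-R)..R, Dh α U ξ) atTop (nhds 0) := by
    rw [funext keyDh]
    have t1 := (hBtend (delta1 α)).add (hBtend (-(delta1 α)))
    have t2 := (hBtend (delta2 α)).add (hBtend (-(delta2 α)))
    have t3 := (hBtend (delta3 α)).add (hBtend (-(delta3 α)))
    have := (t1.add t2).add t3
    simpa [add_assoc] using this
  have hbdryTend : Tendsto (fun R : ℝ => c * (U R - U (-R))) atTop (nhds c) := by
    have h1 : Tendsto (fun R : ℝ => U R - U (-R)) atTop (nhds (1 - 0)) :=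
      htop.sub (hbot.comp tendsto_neg_atTop_atBot)
    have := h1.const_mul c
    simpa using this
  have hTend : Tendsto (fun R : ℝ => ∫ ξ in (-R)..R, g ξ) atTop (nhds c) := by
    rw [funext key]
    have := hbdryTend.sub (hDhTend.const_mul (1/6))
    simpa using this
  -- integrability
  have hnorm : ∀ R : ℝ, (∫ ξ in (-R)..R, ‖g ξ‖) = ∫ ξ in (-R)..R, g ξ :=
    fun R => intervalIntegral.integral_congr fun x _ => Real.norm_of_nonneg (hg0 x)
  have hInt : MeasureTheory.Integrable g := by
    refine MeasureTheory.integrable_of_intervalIntegral_norm_tendsto c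
      (fun R : ℝ => (hgc.intervalIntegrable (-R) R).1) tendsto_neg_atTop_atBot
      tendsto_id ?_
    rw [show (fun R : ℝ => ∫ ξ in (-R)..R, ‖g ξ‖)
        = fun R : ℝ => ∫ ξ in (-R)..R, g ξ from funext hnorm]
    exact hTend
  have hceq : c = ∫ ξ, g ξ :=
    tendsto_nhds_unique hTend
      (MeasureTheory.intervalIntegral_tendsto_integral hInt tendsto_neg_atTop_atBot tendsto_id)
  -- positivity
  have h1 : ∀ᶠ x in atTop, (1:ℝ)/2 < U x := htop.eventually (eventually_gt_nhds (by norm_num))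
  have h2 : ∀ᶠ x in atBot, U x < (1:ℝ)/2 := hbot.eventually (eventually_lt_nhds (by norm_num))
  obtain ⟨b, hb⟩ := h1.exists
  obtain ⟨a, ha⟩ := h2.exists
  have hmem : (1/2 : ℝ) ∈ Set.uIcc (U a) (U b) :=
    Set.mem_uIcc.mpr (Or.inl ⟨le_of_lt ha, le_of_lt hb⟩)
  obtain ⟨ξ0, _, hξ0⟩ := intermediate_value_uIcc (hUc.continuousOn (s := Set.uIcc a b)) hmem
  have hgpos : 0 < g ξ0 := by
    have := (hf.2.2.2.2.2 (1/2) ⟨by norm_num, by norm_num⟩).1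
    simpa [hgdef, hξ0] using this
  have hsupp : 0 < MeasureTheory.volume (Function.support g) := by
    have hopen : IsOpen {x : ℝ | 0 < g x} := isOpen_lt continuous_const hgc
    have hpos := hopen.measure_pos MeasureTheory.volume ⟨ξ0, hgpos⟩
    exact lt_of_lt_of_le hpos (MeasureTheory.measure_mono fun x hx => ne_of_gt hx)
  have hcpos : 0 < c := by
    rw [hceq]
    exact (MeasureTheory.integral_pos_iff_support_of_nonneg hg0 hInt).mpr hsupp
  exact ⟨hInt, hceq, hcpos⟩
end

section
/- (Exponential decay at −∞.) Let U be a traveling wave with speed c. Then there exist constants ω > 0 and C > 0 such that U(ξ) ≤ C·exp(ω·ξ) for all ξ ≤ 0. -/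
open Real Set Filter

open MeasureTheory intervalIntegral

/-- integrated form of the traveling wave equation -/
lemma key_identity (α : ℝ) (f : ℝ → ℝ) (c : ℝ) (U : ℝ → ℝ)
    (hC1 : ContDiff ℝ 1 U)
    (hfUcont : Continuous (fun s => f (U s)))
    (heq : ∀ ξ, c * deriv U ξ = (1/6) * Dh α U ξ + f (U ξ)) (x y : ℝ) :
    c * (U y - U x) =
      (1/6) * ((((∫ s in (x + delta1 α)..(y + delta1 α), U s)
          + ∫ s in (x - delta1 α)..(y - delta1 α), U s)
        + ((∫ s in (x + delta2 α)..(y + delta2 α), U s)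
          + ∫ s in (x - delta2 α)..(y - delta2 α), U s)
        + ((∫ s in (x + delta3 α)..(y + delta3 α), U s)
          + ∫ s in (x - delta3 α)..(y - delta3 α), U s))
        - 6 * ∫ s in x..y, U s)
      + ∫ s in x..y, f (U s) := by
  have hUcont : Continuous U := hC1.continuous
  have hderiv_cont : Continuous (deriv U) := hC1.continuous_deriv le_rfl
  have hFTC : ∫ s in x..y, deriv U s = U y - U x :=
    intervalIntegral.integral_deriv_eq_sub (fun s _ => hC1.differentiable one_ne_zero s)
      (hderiv_cont.intervalIntegrable _ _)
  have h1 : c * (U y - U x) = ∫ s in x..y, (c * deriv U s) := by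
    rw [intervalIntegral.integral_const_mul, hFTC]
  rw [h1, intervalIntegral.integral_congr (g := fun s => (1/6) * Dh α U s + f (U s))
    (fun s _ => heq s)]
  have ca : ∀ e : ℝ, Continuous (fun s : ℝ => U (s + e)) :=
    fun e => hUcont.comp (continuous_add_right e)
  have cs : ∀ e : ℝ, Continuous (fun s : ℝ => U (s - e)) :=
    fun e => hUcont.comp (continuous_sub_right e)
  have ia : ∀ e : ℝ, IntervalIntegrable (fun s : ℝ => U (s + e)) volume x y :=
    fun e => (ca e).intervalIntegrable x y
  have is' : ∀ e : ℝ, IntervalIntegrable (fun s : ℝ => U (s - e)) volume x y :=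
    fun e => (cs e).intervalIntegrable x y
  have hDh : ∀ e : ℝ, (∫ s in x..y, U (s + e)) = ∫ s in (x + e)..(y + e), U s :=
    fun e => intervalIntegral.integral_comp_add_right U e
  have hDh' : ∀ e : ℝ, (∫ s in x..y, U (s - e)) = ∫ s in (x - e)..(y - e), U s :=
    fun e => intervalIntegral.integral_comp_sub_right U e
  have hDhcont : Continuous (Dh α U) := by
    unfold Dh
    exact (((((ca _).add (cs _)).add ((ca _).add (cs _))).add
      ((ca _).add (cs _))).sub (continuous_const.mul hUcont))
  rw [intervalIntegral.integral_add (f := fun s => (1/6:ℝ) * Dh α U s) ((continuous_const.mul hDhcont).intervalIntegrable _ _)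
      (hfUcont.intervalIntegrable _ _), intervalIntegral.integral_const_mul]
  congr 2
  show (∫ s in x..y, ((((U (s + delta1 α) + U (s - delta1 α)) + (U (s + delta2 α) + U (s - delta2 α)))
      + (U (s + delta3 α) + U (s - delta3 α))) - 6 * U s)) = _
  rw [intervalIntegral.integral_sub
      (((((ia _).add (is' _)).add ((ia _).add (is' _))).add ((ia _).add (is' _))))
      ((hUcont.intervalIntegrable x y).const_mul 6),
    intervalIntegral.integral_add (((ia _).add (is' _)).add ((ia _).add (is' _))) ((ia _).add (is' _)),
    intervalIntegral.integral_add ((ia _).add (is' _)) ((ia _).add (is' _)),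
    intervalIntegral.integral_add (ia _) (is' _),
    intervalIntegral.integral_add (ia _) (is' _),
    intervalIntegral.integral_add (ia _) (is' _),
    intervalIntegral.integral_const_mul,
    hDh, hDh, hDh, hDh', hDh', hDh']

/-- If `U` tends to `L` along `l` (in a uniform-tail sense) then the running window
integral `∫_y^{y+a} U` tends to `a*L`. -/
lemma tendsto_window_integral {U : ℝ → ℝ} (hU : Continuous U) (a L : ℝ) {l : Filter ℝ}
    (h : ∀ ε : ℝ, 0 < ε → ∀ᶠ y in l, ∀ s ∈ Set.uIoc y (y + a), |U s - L| ≤ ε) :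
    Filter.Tendsto (fun y => ∫ s in y..(y + a), U s) l (nhds (a * L)) := by
  rw [Metric.tendsto_nhds]
  intro ε hε
  filter_upwards [h (ε / (|a| + 1)) (by positivity)] with y hy
  have h1 : (∫ s in y..(y + a), U s) - a * L = ∫ s in y..(y + a), (U s - L) := by
    rw [intervalIntegral.integral_sub (hU.intervalIntegrable _ _) intervalIntegrable_const,
      intervalIntegral.integral_const]
    simp only [smul_eq_mul]; ring
  have h2 : |(∫ s in y..(y + a), U s) - a * L| ≤ (ε / (|a| + 1)) * |(y + a) - y| := by
    rw [h1]
    have := intervalIntegral.norm_integral_le_of_norm_le_const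
      (f := fun s => U s - L) (C := ε / (|a| + 1)) (a := y) (b := y + a)
      (fun s hs => by rw [Real.norm_eq_abs]; exact hy s hs)
    simpa [Real.norm_eq_abs] using this
  have h3 : |(y + a) - y| = |a| := by ring_nf
  rw [Real.dist_eq]
  have h4 : (ε / (|a| + 1)) * |a| < ε := by
    have h5 : |a| < |a| + 1 := lt_add_one _
    have h6 : (0:ℝ) < |a| + 1 := by positivity
    calc (ε / (|a| + 1)) * |a| < (ε / (|a| + 1)) * (|a| + 1) := by
          apply mul_lt_mul_of_pos_left h5 (by positivity)
      _ = ε := by field_simp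
  calc |(∫ s in y..(y + a), U s) - a * L| ≤ (ε / (|a| + 1)) * |a| := h3 ▸ h2
    _ < ε := h4
lemma chasles {U : ℝ → ℝ} (hUcont : Continuous U) (d x y : ℝ) :
    (∫ s in (x + d)..(y + d), U s) - ∫ s in x..y, U s
      = (∫ s in y..(y + d), U s) - ∫ s in x..(x + d), U s := by
  have h1 := intervalIntegral.integral_add_adjacent_intervals (μ := volume) (f := U)
    (a := x) (b := y) (c := y + d) (hUcont.intervalIntegrable _ _) (hUcont.intervalIntegrable _ _)
  have h2 := intervalIntegral.integral_add_adjacent_intervals (μ := volume) (f := U)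
    (a := x) (b := x + d) (c := y + d) (hUcont.intervalIntegrable _ _)
    (hUcont.intervalIntegrable _ _)
  linarith

lemma window_top {U : ℝ → ℝ} (hUcont : Continuous U) (htop : Tendsto U atTop (nhds 1)) (a : ℝ) :
    Tendsto (fun y => ∫ s in y..(y + a), U s) atTop (nhds a) := by
  have := tendsto_window_integral hUcont a 1 (l := atTop) ?_
  · simpa using this
  · intro ε hε
    obtain ⟨N, hN⟩ := eventually_atTop.1 (Metric.tendsto_nhds.1 htop ε hε)
    filter_upwards [eventually_ge_atTop (N + |a|)] with y hy s hs
    have h1 : y - |a| ≤ y ⊓ (y + a) := le_min (by linarith [abs_nonneg a]) (by linarith [neg_abs_le a])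
    have h2 : N ≤ s := by have h5 : y ⊓ (y + a) < s := hs.1; linarith [h5, h1]
    have := hN s h2
    rw [Real.dist_eq] at this
    exact this.le

lemma window_bot {U : ℝ → ℝ} (hUcont : Continuous U) (hbot : Tendsto U atBot (nhds 0)) (a : ℝ) :
    Tendsto (fun y => ∫ s in y..(y + a), U s) atBot (nhds 0) := by
  have := tendsto_window_integral hUcont a 0 (l := atBot) ?_
  · simpa using this
  · intro ε hε
    obtain ⟨N, hN⟩ := eventually_atBot.1 (Metric.tendsto_nhds.1 hbot ε hε)
    filter_upwards [eventually_le_atBot (N - |a|)] with y hy s hs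
    have h2 : s ≤ N := by
      have := hs.2
      have h3 : y ⊔ (y + a) ≤ y + |a| := sup_le (by linarith [abs_nonneg a]) (by linarith [le_abs_self a])
      linarith [hs.2, h3]
    have := hN s h2
    rw [Real.dist_eq] at this
    exact this.le
lemma fU_nonneg {f : ℝ → ℝ} {f' : ℝ → ℝ} {U : ℝ → ℝ}
    (hf0 : f 0 = 0) (hf1 : f 1 = 0)
    (hfIoo : ∀ s ∈ Set.Ioo (0:ℝ) 1, 0 < f s ∧ f s ≤ f' 0 * s)
    (hmem : ∀ ξ, U ξ ∈ Set.Icc (0:ℝ) 1) (s : ℝ) : 0 ≤ f (U s) := by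
  rcases eq_or_lt_of_le (hmem s).1 with h0 | h0
  · rw [← h0, hf0]
  rcases eq_or_lt_of_le (hmem s).2 with h1 | h1
  · rw [h1, hf1]
  · exact (hfIoo _ ⟨h0, h1⟩).1.le

lemma c_pos (α : ℝ) (f f' : ℝ → ℝ) (c : ℝ) (U : ℝ → ℝ)
    (hC1 : ContDiff ℝ 1 U) (hmem : ∀ ξ, U ξ ∈ Set.Icc (0:ℝ) 1)
    (heq : ∀ ξ, c * deriv U ξ = (1/6) * Dh α U ξ + f (U ξ))
    (hbot : Tendsto U atBot (nhds 0)) (htop : Tendsto U atTop (nhds 1))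
    (hfUcont : Continuous (fun s => f (U s)))
    (hf0 : f 0 = 0) (hf1 : f 1 = 0)
    (hfIoo : ∀ s ∈ Set.Ioo (0:ℝ) 1, 0 < f s ∧ f s ≤ f' 0 * s) :
    0 < c := by
  have hUcont : Continuous U := hC1.continuous
  have hfU0 : ∀ s, 0 ≤ f (U s) := fU_nonneg hf0 hf1 hfIoo hmem
  set d1 := delta1 α
  set d2 := delta2 α
  set d3 := delta3 α
  -- the sum of window integrals
  set W : ℝ → ℝ := fun y => ((∫ s in y..(y + d1), U s) + ∫ s in y..(y + -d1), U s)
    + ((∫ s in y..(y + d2), U s) + ∫ s in y..(y + -d2), U s)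
    + ((∫ s in y..(y + d3), U s) + ∫ s in y..(y + -d3), U s) with hWdef
  set g : ℝ → ℝ := fun r => ∫ s in (-r)..r, f (U s) with hgdef
  have hgid : ∀ r : ℝ, g r = c * (U r - U (-r)) - (1/6) * (W r - W (-r)) := by
    intro r
    have hk := key_identity α f c U hC1 hfUcont heq (-r) r
    have e1 := chasles hUcont d1 (-r) r
    have e1' := chasles hUcont (-d1) (-r) r
    have e2 := chasles hUcont d2 (-r) r
    have e2' := chasles hUcont (-d2) (-r) r
    have e3 := chasles hUcont d3 (-r) r
    have e3' := chasles hUcont (-d3) (-r) r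
    have hsub : ∀ x : ℝ, x - d1 = x + -d1 ∧ x - d2 = x + -d2 ∧ x - d3 = x + -d3 :=
      fun x => ⟨by ring, by ring, by ring⟩
    simp only [sub_eq_add_neg] at hk
    simp only [hWdef, hgdef]
    linarith [hk, e1, e1', e2, e2', e3, e3']
  have hWtop : Tendsto W atTop (nhds 0) := by
    have h := ((((window_top hUcont htop d1).add (window_top hUcont htop (-d1))).add
      ((window_top hUcont htop d2).add (window_top hUcont htop (-d2)))).add
      ((window_top hUcont htop d3).add (window_top hUcont htop (-d3))))
    simpa using h
  have hWbot : Tendsto (fun r : ℝ => W (-r)) atTop (nhds 0) := by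
    have h := ((((window_bot hUcont hbot d1).add (window_bot hUcont hbot (-d1))).add
      ((window_bot hUcont hbot d2).add (window_bot hUcont hbot (-d2)))).add
      ((window_bot hUcont hbot d3).add (window_bot hUcont hbot (-d3))))
    have h2 : Tendsto W atBot (nhds 0) := by simpa using h
    exact h2.comp tendsto_neg_atTop_atBot
  have hgtend : Tendsto g atTop (nhds c) := by
    have h1 : Tendsto (fun r : ℝ => U (-r)) atTop (nhds 0) := hbot.comp tendsto_neg_atTop_atBot
    have h2 : Tendsto (fun r : ℝ => c * (U r - U (-r)) - (1/6) * (W r - W (-r))) atTop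
        (nhds (c * (1 - 0) - (1/6) * (0 - 0))) :=
      ((htop.sub h1).const_mul c).sub ((hWtop.sub hWbot).const_mul (1/6))
    have h3 : c * (1 - 0) - (1/6) * (0 - 0) = c := by ring
    rw [h3] at h2
    exact h2.congr (fun r => (hgid r).symm)
  -- find a point where U = 1/2
  obtain ⟨q, hq⟩ := (htop.eventually_const_lt (by norm_num : (1:ℝ)/2 < 1)).exists
  obtain ⟨p, hpq, hp⟩ : ∃ p, p ≤ q ∧ U p < 1/2 :=
    ((eventually_le_atBot q).and (hbot.eventually_lt_const (by norm_num : (0:ℝ) < 1/2))).exists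
  obtain ⟨ξs, _, hξs⟩ := intermediate_value_Icc hpq hUcont.continuousOn ⟨hp.le, hq.le⟩
  have hfpos : 0 < f (U ξs) := by
    rw [hξs]; exact (hfIoo (1/2) ⟨by norm_num, by norm_num⟩).1
  have hev : ∀ᶠ s in nhds ξs, f (U ξs) / 2 < f (U s) :=
    (hfUcont.continuousAt (x := ξs)).eventually_const_lt (half_lt_self hfpos)
  obtain ⟨r, hr, hball⟩ := Metric.eventually_nhds_iff.1 hev
  set P : ℝ := r * (f (U ξs) / 2) with hPdef
  have hPpos : 0 < P := by positivity
  have hmid : P ≤ ∫ s in (ξs - r/2)..(ξs + r/2), f (U s) := by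
    have hle : ξs - r/2 ≤ ξs + r/2 := by linarith
    have h := intervalIntegral.integral_mono_on (μ := volume) hle
      (f := fun _ => f (U ξs) / 2) (g := fun s => f (U s))
      intervalIntegrable_const (hfUcont.intervalIntegrable _ _)
      (fun s hs => by
        refine (hball ?_).le
        rw [Real.dist_eq, abs_lt]
        constructor <;> [linarith [hs.1]; linarith [hs.2]])
    rw [intervalIntegral.integral_const, smul_eq_mul] at h
    calc P = (ξs + r/2 - (ξs - r/2)) * (f (U ξs) / 2) := by rw [hPdef]; ring_nf
      _ ≤ _ := h
  have hglower : ∀ r' : ℝ, max (-(ξs - r/2)) (ξs + r/2) ≤ r' → P ≤ g r' := by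
    intro r' hr'
    have ha : -r' ≤ ξs - r/2 := by
      have := le_trans (le_max_left _ _) hr'; linarith
    have hb : ξs + r/2 ≤ r' := le_trans (le_max_right _ _) hr'
    have hab : ξs - r/2 ≤ ξs + r/2 := by linarith
    have i1 := intervalIntegral.integral_add_adjacent_intervals (μ := volume)
      (f := fun s => f (U s)) (a := -r') (b := ξs - r/2) (c := ξs + r/2)
      (hfUcont.intervalIntegrable _ _) (hfUcont.intervalIntegrable _ _)
    have i2 := intervalIntegral.integral_add_adjacent_intervals (μ := volume)
      (f := fun s => f (U s)) (a := -r') (b := ξs + r/2) (c := r')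
      (hfUcont.intervalIntegrable _ _) (hfUcont.intervalIntegrable _ _)
    have n1 : 0 ≤ ∫ s in (-r')..(ξs - r/2), f (U s) :=
      intervalIntegral.integral_nonneg ha (fun u _ => hfU0 u)
    have n2 : 0 ≤ ∫ s in (ξs + r/2)..r', f (U s) :=
      intervalIntegral.integral_nonneg hb (fun u _ => hfU0 u)
    have : g r' = ∫ s in (-r')..r', f (U s) := rfl
    rw [this]
    linarith [hmid]
  have hPc : P ≤ c :=
    ge_of_tendsto hgtend (eventually_atTop.2 ⟨_, hglower⟩)
  linarith
set_option maxHeartbeats 1000000 in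
lemma U_integrable (α : ℝ) (f f' : ℝ → ℝ) (c : ℝ) (U : ℝ → ℝ)
    (hC1 : ContDiff ℝ 1 U) (hmem : ∀ ξ, U ξ ∈ Set.Icc (0:ℝ) 1)
    (heq : ∀ ξ, c * deriv U ξ = (1/6) * Dh α U ξ + f (U ξ))
    (hfUcont : Continuous (fun s => f (U s)))
    {β ξ₀ : ℝ} (hβ : 0 < β) (hlow : ∀ x ≤ ξ₀, β * U x ≤ f (U x)) :
    ∀ b, IntegrableOn U (Set.Iic b) volume := by
  have hUcont : Continuous U := hC1.continuous
  have hU0 : ∀ ξ, 0 ≤ U ξ := fun ξ => (hmem ξ).1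
  have hU1 : ∀ ξ, U ξ ≤ 1 := fun ξ => (hmem ξ).2
  set d1 := delta1 α
  set d2 := delta2 α
  set d3 := delta3 α
  have hwin : ∀ (e y : ℝ), |∫ s in y..(y + e), U s| ≤ |e| := by
    intro e y
    have h := intervalIntegral.norm_integral_le_of_norm_le_const (f := U) (C := 1)
      (a := y) (b := y + e) (fun s _ => by
        rw [Real.norm_eq_abs, abs_of_nonneg (hU0 s)]; exact hU1 s)
    rw [Real.norm_eq_abs] at h
    calc |∫ s in y..(y + e), U s| ≤ 1 * |y + e - y| := h
      _ = |e| := by rw [one_mul]; ring_nf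
  set B : ℝ := |c| + |d1| + |d2| + |d3| with hBdef
  have hbound : ∀ x ≤ ξ₀, (∫ s in x..ξ₀, U s) ≤ B / β := by
    intro x hx
    have hk := key_identity α f c U hC1 hfUcont heq x ξ₀
    have e1 := chasles hUcont d1 x ξ₀
    have e1' := chasles hUcont (-d1) x ξ₀
    have e2 := chasles hUcont d2 x ξ₀
    have e2' := chasles hUcont (-d2) x ξ₀
    have e3 := chasles hUcont d3 x ξ₀
    have e3' := chasles hUcont (-d3) x ξ₀
    simp only [sub_eq_add_neg] at hk
    have w1 := hwin d1 ξ₀; have w1' := hwin (-d1) ξ₀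
    have w2 := hwin d2 ξ₀; have w2' := hwin (-d2) ξ₀
    have w3 := hwin d3 ξ₀; have w3' := hwin (-d3) ξ₀
    have v1 := hwin d1 x; have v1' := hwin (-d1) x
    have v2 := hwin d2 x; have v2' := hwin (-d2) x
    have v3 := hwin d3 x; have v3' := hwin (-d3) x
    have habs : ∀ a b : ℝ, |a| ≤ b → a ≤ b ∧ -a ≤ b := fun a b h =>
      ⟨le_trans (le_abs_self a) h, le_trans (neg_le_abs a) h⟩
    have hcU : c * (U ξ₀ - U x) ≤ |c| := by
      have h1 : |c * (U ξ₀ - U x)| ≤ |c| * 1 := by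
        rw [abs_mul]
        apply mul_le_mul_of_nonneg_left _ (abs_nonneg c)
        rw [abs_le]; constructor <;> nlinarith [hU0 x, hU1 x, hU0 ξ₀, hU1 ξ₀]
      nlinarith [le_abs_self (c * (U ξ₀ - U x))]
    have hfUint : ∫ s in x..ξ₀, f (U s) ≤ B := by
      have heqint : (∫ s in x..ξ₀, f (U s)) = c * (U ξ₀ - U x)
          - (1/6) * (((∫ s in ξ₀..(ξ₀ + d1), U s) - (∫ s in x..(x + d1), U s)
            + ((∫ s in ξ₀..(ξ₀ + -d1), U s) - ∫ s in x..(x + -d1), U s))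
          + ((∫ s in ξ₀..(ξ₀ + d2), U s) - (∫ s in x..(x + d2), U s)
            + ((∫ s in ξ₀..(ξ₀ + -d2), U s) - ∫ s in x..(x + -d2), U s))
          + ((∫ s in ξ₀..(ξ₀ + d3), U s) - (∫ s in x..(x + d3), U s)
            + ((∫ s in ξ₀..(ξ₀ + -d3), U s) - ∫ s in x..(x + -d3), U s))) := by
        linarith [hk, e1, e1', e2, e2', e3, e3']
      rw [heqint]
      have habs' : ∀ e y : ℝ, -(|e|) ≤ (∫ s in y..(y + e), U s) ∧ (∫ s in y..(y + e), U s) ≤ |e| := by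
        intro e y
        constructor
        · linarith [(habs _ _ (hwin e y)).2]
        · exact (habs _ _ (hwin e y)).1
      have a1 := habs' d1 ξ₀; have a1' := habs' (-d1) ξ₀
      have a2 := habs' d2 ξ₀; have a2' := habs' (-d2) ξ₀
      have a3 := habs' d3 ξ₀; have a3' := habs' (-d3) ξ₀
      have b1 := habs' d1 x; have b1' := habs' (-d1) x
      have b2 := habs' d2 x; have b2' := habs' (-d2) x
      have b3 := habs' d3 x; have b3' := habs' (-d3) x
      have hne : |(-d1)| = |d1| ∧ |(-d2)| = |d2| ∧ |(-d3)| = |d3| :=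
        ⟨abs_neg d1, abs_neg d2, abs_neg d3⟩
      rw [hne.1] at a1' b1'; rw [hne.2.1] at a2' b2'; rw [hne.2.2] at a3' b3'
      rw [hBdef]
      linarith [a1.1, a1.2, a1'.1, a1'.2, a2.1, a2.2, a2'.1, a2'.2, a3.1, a3.2, a3'.1, a3'.2,
        b1.1, b1.2, b1'.1, b1'.2, b2.1, b2.2, b2'.1, b2'.2, b3.1, b3.2, b3'.1, b3'.2, hcU]
    have hmono : β * ∫ s in x..ξ₀, U s ≤ ∫ s in x..ξ₀, f (U s) := by
      have h := intervalIntegral.integral_mono_on (μ := volume) hx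
        (f := fun s => β * U s) (g := fun s => f (U s))
        ((continuous_const.mul hUcont).intervalIntegrable _ _) (hfUcont.intervalIntegrable _ _)
        (fun s hs => hlow s hs.2)
      rwa [intervalIntegral.integral_const_mul] at h
    rw [le_div_iff₀ hβ, mul_comm]
    linarith
  have hIic0 : IntegrableOn U (Set.Iic ξ₀) volume := by
    apply MeasureTheory.integrableOn_Iic_of_intervalIntegral_norm_bounded (B / β) ξ₀
      (fun i : ℝ => hUcont.integrableOn_Ioc) tendsto_id
    filter_upwards [eventually_le_atBot ξ₀] with x hx
    have : (∫ s in x..ξ₀, ‖U s‖) = ∫ s in x..ξ₀, U s :=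
      intervalIntegral.integral_congr (fun s _ => Real.norm_of_nonneg (hU0 s))
    simp only [id]
    rw [this]
    exact hbound x hx
  intro b
  rcases le_total b ξ₀ with h | h
  · exact hIic0.mono_set (Set.Iic_subset_Iic.2 h)
  · rw [← Set.Iic_union_Icc_eq_Iic h]
    exact hIic0.union hUcont.integrableOn_Icc

set_option maxHeartbeats 1000000 in
theorem stmt15 (α : ℝ) (f f' : ℝ → ℝ) (hf : FisherKPP f f')
    (c : ℝ) (U : ℝ → ℝ) (hU : IsTravelingWave α f c U) :
    ∃ ω C : ℝ, 0 < ω ∧ 0 < C ∧ ∀ ξ : ℝ, ξ ≤ 0 → U ξ ≤ C * Real.exp (ω * ξ) := by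
  obtain ⟨hC1, hmem, heq, hbot, htop⟩ := hU
  obtain ⟨hder, hf'c, hf0, hf1, hfp0, hfIoo⟩ := hf
  have hUcont : Continuous U := hC1.continuous
  have hU0 : ∀ ξ, 0 ≤ U ξ := fun ξ => (hmem ξ).1
  have hU1 : ∀ ξ, U ξ ≤ 1 := fun ξ => (hmem ξ).2
  have hfUcont : Continuous (fun s => f (U s)) :=
    continuous_iff_continuousAt.2 fun ξ =>
      ((hder _ (hmem ξ)).continuousAt).comp hUcont.continuousAt
  have hfU0 : ∀ s, 0 ≤ f (U s) := fU_nonneg hf0 hf1 hfIoo hmem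
  have hfle : ∀ s ∈ Set.Icc (0:ℝ) 1, f s ≤ f' 0 * s := by
    intro s hs
    rcases eq_or_lt_of_le hs.1 with h0 | h0
    · rw [← h0, hf0]; simp
    rcases eq_or_lt_of_le hs.2 with h1 | h1
    · rw [h1, hf1]; nlinarith [hfp0]
    · exact (hfIoo s ⟨h0, h1⟩).2
  have hc : 0 < c := c_pos α f f' c U hC1 hmem heq hbot htop hfUcont hf0 hf1 hfIoo
  -- the linearization constant β and threshold s₀
  set β := f' 0 / 2 with hβdef
  have hβ : 0 < β := half_pos hfp0
  have hslope : Tendsto (slope f 0) (nhdsWithin 0 {(0:ℝ)}ᶜ) (nhds (f' 0)) :=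
    hasDerivAt_iff_tendsto_slope.1 (hder 0 ⟨le_rfl, zero_le_one⟩)
  have hev1 : ∀ᶠ s in nhdsWithin 0 {(0:ℝ)}ᶜ, β < slope f 0 s :=
    hslope.eventually_const_lt (half_lt_self hfp0)
  have hev2 : ∀ᶠ s in nhds 0, s ∈ ({(0:ℝ)}ᶜ : Set ℝ) → β < slope f 0 s :=
    eventually_nhdsWithin_iff.1 hev1
  obtain ⟨ε, hε, hball⟩ := Metric.eventually_nhds_iff.1 hev2
  set s₀ : ℝ := ε / 2 with hs₀def
  have hs₀ : 0 < s₀ := by positivity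
  have hβs : ∀ s : ℝ, 0 ≤ s → s ≤ s₀ → β * s ≤ f s := by
    intro s h0 h1
    rcases eq_or_lt_of_le h0 with h | h
    · simp [← h, hf0]
    · have hd : dist s 0 < ε := by
        rw [Real.dist_eq, sub_zero, abs_of_pos h]; rw [hs₀def] at h1; linarith
      have hmem' : s ∈ ({(0:ℝ)}ᶜ : Set ℝ) := by
        simp [Set.mem_compl_singleton_iff]; exact ne_of_gt h
      have hsl := hball hd hmem'
      rw [slope_def_field, hf0, sub_zero, sub_zero] at hsl
      have := (lt_div_iff₀ h).1 hsl
      linarith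
  obtain ⟨a₀, ha₀⟩ := eventually_atBot.1 (hbot.eventually_lt_const hs₀)
  set ξ₀ : ℝ := min a₀ 0 with hξ₀def
  have hξ₀0 : ξ₀ ≤ 0 := min_le_right _ _
  have hlow : ∀ x ≤ ξ₀, β * U x ≤ f (U x) := fun x hx =>
    hβs _ (hU0 x) ((ha₀ x (le_trans hx (min_le_left _ _))).le)
  -- integrability and the functions V and F
  have hIic : ∀ b, IntegrableOn U (Set.Iic b) volume :=
    U_integrable α f f' c U hC1 hmem heq hfUcont hβ hlow
  have hfIic : ∀ b, IntegrableOn (fun s => f (U s)) (Set.Iic b) volume := by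
    intro b
    exact Integrable.mono' ((hIic b).const_mul (f' 0)) hfUcont.aestronglyMeasurable
      (ae_of_all _ fun s => by rw [Real.norm_of_nonneg (hfU0 s)]; exact hfle _ (hmem s))
  set V : ℝ → ℝ := fun b => ∫ s in Set.Iic b, U s with hVdef
  set F : ℝ → ℝ := fun b => ∫ s in Set.Iic b, f (U s) with hFdef
  have hVmono : Monotone V := fun a b hab =>
    setIntegral_mono_set (hIic b) (ae_of_all _ hU0)
      (HasSubset.Subset.eventuallyLE (Set.Iic_subset_Iic.2 hab))
  have hV0 : ∀ b, 0 ≤ V b := fun b => setIntegral_nonneg measurableSet_Iic fun s _ => hU0 s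
  have hVdiff : ∀ a b : ℝ, V b - V a = ∫ s in a..b, U s := fun a b =>
    intervalIntegral.integral_Iic_sub_Iic (hIic a) (hIic b)
  have hVbot : Tendsto V atBot (nhds 0) := by
    have h1 := MeasureTheory.intervalIntegral_tendsto_integral_Iic (μ := volume) ξ₀
      (hIic ξ₀) (tendsto_id (α := ℝ) (x := atBot))
    have h3 : Tendsto (fun x : ℝ => V ξ₀ - ∫ s in x..ξ₀, U s) atBot (nhds (V ξ₀ - V ξ₀)) :=
      tendsto_const_nhds.sub h1
    rw [sub_self] at h3
    exact h3.congr fun x => by rw [← hVdiff x ξ₀]; ring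
  have hFbd : ∀ ξ, F ξ ≤ f' 0 * V ξ := by
    intro ξ
    have h := setIntegral_mono_on (hfIic ξ) ((hIic ξ).const_mul (f' 0)) measurableSet_Iic
      (fun s _ => hfle _ (hmem s))
    rwa [MeasureTheory.integral_const_mul] at h
  have hβVF : ∀ ξ ≤ ξ₀, β * V ξ ≤ F ξ := by
    intro ξ hξ
    have h := setIntegral_mono_on ((hIic ξ).const_mul β) (hfIic ξ) measurableSet_Iic
      (fun s hs => hlow s (le_trans hs hξ))
    rwa [MeasureTheory.integral_const_mul] at h
  set d1 := delta1 α with hd1def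
  set d2 := delta2 α with hd2def
  set d3 := delta3 α with hd3def
  -- the limit form of the integrated equation
  have hkeyV : ∀ ξ : ℝ, c * U ξ
      = (1/6) * (((V (ξ + d1) + V (ξ - d1)) + (V (ξ + d2) + V (ξ - d2))
          + (V (ξ + d3) + V (ξ - d3))) - 6 * V ξ) + F ξ := by
    intro ξ
    have hfun : ∀ x : ℝ, c * (U ξ - U x)
        = (1/6) * ((((V (ξ + d1) - V (x + d1)) + (V (ξ - d1) - V (x - d1)))
            + ((V (ξ + d2) - V (x + d2)) + (V (ξ - d2) - V (x - d2)))
            + ((V (ξ + d3) - V (x + d3)) + (V (ξ - d3) - V (x - d3))))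
            - 6 * (V ξ - V x))
          + ∫ s in x..ξ, f (U s) := by
      intro x
      have hk := key_identity α f c U hC1 hfUcont heq x ξ
      rw [← hVdiff (x + d1) (ξ + d1), ← hVdiff (x - d1) (ξ - d1),
        ← hVdiff (x + d2) (ξ + d2), ← hVdiff (x - d2) (ξ - d2),
        ← hVdiff (x + d3) (ξ + d3), ← hVdiff (x - d3) (ξ - d3), ← hVdiff x ξ] at hk
      exact hk
    have lVa : ∀ e : ℝ, Tendsto (fun x : ℝ => V (x + e)) atBot (nhds 0) :=
      fun e => hVbot.comp (tendsto_atBot_add_const_right atBot e tendsto_id)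
    have lVs : ∀ e : ℝ, Tendsto (fun x : ℝ => V (x - e)) atBot (nhds 0) := by
      intro e
      have h := (lVa (-e)).congr (fun x => by rw [← sub_eq_add_neg])
      exact h
    have l1 : Tendsto (fun x : ℝ => c * (U ξ - U x)) atBot (nhds (c * (U ξ - 0))) :=
      (tendsto_const_nhds.sub hbot).const_mul c
    have lint : Tendsto (fun x : ℝ => ∫ s in x..ξ, f (U s)) atBot (nhds (F ξ)) :=
      MeasureTheory.intervalIntegral_tendsto_integral_Iic (μ := volume) ξ
        (hfIic ξ) (tendsto_id (α := ℝ) (x := atBot))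
    have l2 := ((((((tendsto_const_nhds (x := V (ξ + d1)) (f := atBot)).sub (lVa d1)).add
          ((tendsto_const_nhds (x := V (ξ - d1))).sub (lVs d1))).add
          (((tendsto_const_nhds (x := V (ξ + d2))).sub (lVa d2)).add
            ((tendsto_const_nhds (x := V (ξ - d2))).sub (lVs d2)))).add
          (((tendsto_const_nhds (x := V (ξ + d3))).sub (lVa d3)).add
            ((tendsto_const_nhds (x := V (ξ - d3))).sub (lVs d3)))).sub
          (((tendsto_const_nhds (x := V ξ)).sub hVbot).const_mul (6:ℝ))).const_mul
          ((1:ℝ)/6) |>.add lint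
    have l1' : Tendsto (fun x : ℝ =>
        (1/6) * ((((V (ξ + d1) - V (x + d1)) + (V (ξ - d1) - V (x - d1)))
            + ((V (ξ + d2) - V (x + d2)) + (V (ξ - d2) - V (x - d2)))
            + ((V (ξ + d3) - V (x + d3)) + (V (ξ - d3) - V (x - d3))))
            - 6 * (V ξ - V x))
          + ∫ s in x..ξ, f (U s)) atBot (nhds (c * (U ξ - 0))) :=
      l1.congr fun x => hfun x
    have huniq := tendsto_nhds_unique l1' l2
    simp only [sub_zero] at huniq
    rw [huniq]
  -- lattice constant
  set D : ℝ := |d1| + |d2| + |d3| with hDdef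
  have hDnn : 0 ≤ D := by positivity
  have habs1 : -D ≤ d1 ∧ d1 ≤ D := by
    constructor <;> [nlinarith [neg_abs_le d1, abs_nonneg d2, abs_nonneg d3];
      nlinarith [le_abs_self d1, abs_nonneg d2, abs_nonneg d3]]
  have habs2 : -D ≤ d2 ∧ d2 ≤ D := by
    constructor <;> [nlinarith [neg_abs_le d2, abs_nonneg d1, abs_nonneg d3];
      nlinarith [le_abs_self d2, abs_nonneg d1, abs_nonneg d3]]
  have habs3 : -D ≤ d3 ∧ d3 ≤ D := by
    constructor <;> [nlinarith [neg_abs_le d3, abs_nonneg d1, abs_nonneg d2];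
      nlinarith [le_abs_self d3, abs_nonneg d1, abs_nonneg d2]]
  -- a mean value point
  have hmean : ∀ x : ℝ, ∃ ξ ∈ Set.Icc x (x+1), U ξ ≤ V (x+1) - V x := by
    intro x
    by_contra hcon
    push_neg at hcon
    obtain ⟨m, hm, hmin⟩ := isCompact_Icc.exists_isMinOn
      (Set.nonempty_Icc.2 (by linarith : x ≤ x + 1)) hUcont.continuousOn
    have h1 : V (x+1) - V x < U m := hcon m hm
    have h2 : U m ≤ V (x+1) - V x := by
      rw [hVdiff]
      have h := intervalIntegral.integral_mono_on (μ := volume)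
        (by linarith : x ≤ x + 1) (f := fun _ => U m) (g := U)
        intervalIntegrable_const (hUcont.intervalIntegrable _ _)
        (fun s hs => isMinOn_iff.1 hmin s hs)
      rw [intervalIntegral.integral_const, smul_eq_mul] at h
      calc U m = (x + 1 - x) * U m := by ring
        _ ≤ _ := h
    linarith
  -- the step inequality
  have hstep : ∀ x : ℝ, x + 1 ≤ ξ₀ →
      β * V x ≤ (c+1) * (V (x + (1+D)) - V (x - (1+D))) := by
    intro x hx
    obtain ⟨ξ, hξmem, hξle⟩ := hmean x
    have hξξ₀ : ξ ≤ ξ₀ := le_trans hξmem.2 hx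
    have h1 : β * V x ≤ β * V ξ := mul_le_mul_of_nonneg_left (hVmono hξmem.1) hβ.le
    have h2 : β * V ξ ≤ F ξ := hβVF ξ hξξ₀
    have hk := hkeyV ξ
    have m1 : V (ξ - D) ≤ V (ξ + d1) := hVmono (by linarith [habs1.1])
    have m1' : V (ξ - D) ≤ V (ξ - d1) := hVmono (by linarith [habs1.2])
    have m2 : V (ξ - D) ≤ V (ξ + d2) := hVmono (by linarith [habs2.1])
    have m2' : V (ξ - D) ≤ V (ξ - d2) := hVmono (by linarith [habs2.2])
    have m3 : V (ξ - D) ≤ V (ξ + d3) := hVmono (by linarith [habs3.1])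
    have m3' : V (ξ - D) ≤ V (ξ - d3) := hVmono (by linarith [habs3.2])
    have m0 : V ξ ≤ V (ξ + D) := hVmono (by linarith)
    have hF : F ξ ≤ c * U ξ + (V (ξ + D) - V (ξ - D)) := by linarith
    have mup : V (ξ + D) ≤ V (x + (1+D)) := hVmono (by linarith [hξmem.2])
    have mdn : V (x - (1+D)) ≤ V (ξ - D) := hVmono (by linarith [hξmem.1])
    have mv1 : V (x + 1) ≤ V (x + (1+D)) := hVmono (by linarith)
    have mv2 : V (x - (1+D)) ≤ V x := hVmono (by linarith)
    have hcU : c * U ξ ≤ c * (V (x + (1+D)) - V (x - (1+D))) :=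
      mul_le_mul_of_nonneg_left (by linarith) hc.le
    nlinarith [h1, h2, hF, hcU, mup, mdn]
  -- geometric decay of V
  set R : ℝ := 1 + D with hRdef
  have hRpos : 0 < R := by linarith
  set θ : ℝ := (c+1)/(β+(c+1)) with hθdef
  have hβc : 0 < β + (c+1) := by linarith
  have hθpos : 0 < θ := div_pos (by linarith) hβc
  have hθlt1 : θ < 1 := (div_lt_one hβc).2 (by linarith)
  have hgeo : ∀ z : ℝ, z ≤ ξ₀ → V (z - 2*R) ≤ θ * V z := by
    intro z hz
    have hx := hstep (z - R) (by rw [hRdef]; linarith)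
    have e1 : z - R + (1+D) = z := by rw [hRdef]; ring
    have e2 : z - R - (1+D) = z - 2*R := by rw [hRdef]; ring
    rw [e1, e2] at hx
    have hmono1 : V (z - 2*R) ≤ V (z - R) := hVmono (by linarith)
    have hgoal : (β + (c+1)) * V (z - 2*R) ≤ (c+1) * V z := by
      nlinarith [hx, mul_le_mul_of_nonneg_left hmono1 hβ.le]
    rw [hθdef, div_mul_eq_mul_div, le_div_iff₀ hβc]
    linarith
  have hiter : ∀ n : ℕ, V (ξ₀ - 2*R*n) ≤ θ^n * V ξ₀ := by
    intro n
    induction n with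
    | zero => simp
    | succ n ih =>
      have harg : ξ₀ - 2*R*((n:ℝ)+1) = (ξ₀ - 2*R*n) - 2*R := by ring
      have hargle : ξ₀ - 2*R*(n:ℝ) ≤ ξ₀ := by nlinarith [hRpos, (Nat.cast_nonneg n : (0:ℝ) ≤ (n:ℝ))]
      calc V (ξ₀ - 2*R*((n:ℕ)+1:ℕ)) = V ((ξ₀ - 2*R*n) - 2*R) := by push_cast; rw [harg]
        _ ≤ θ * V (ξ₀ - 2*R*n) := hgeo _ hargle
        _ ≤ θ * (θ^n * V ξ₀) := mul_le_mul_of_nonneg_left ih hθpos.le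
        _ = θ^(n+1) * V ξ₀ := by ring
  set ω : ℝ := -Real.log θ / (2*R) with hωdef
  have hlogθ : Real.log θ < 0 := Real.log_neg hθpos hθlt1
  have hω : 0 < ω := div_pos (neg_pos.2 hlogθ) (by linarith)
  set C₁ : ℝ := (V ξ₀ + 1)/θ * Real.exp (-ω*ξ₀) with hC₁def
  have hC₁pos : 0 < C₁ :=
    mul_pos (div_pos (by linarith [hV0 ξ₀]) hθpos) (Real.exp_pos _)
  have hVexp : ∀ ξ : ℝ, ξ ≤ ξ₀ → V ξ ≤ C₁ * Real.exp (ω * ξ) := by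
    intro ξ hξ
    set n : ℕ := ⌊(ξ₀ - ξ)/(2*R)⌋₊ with hndef
    have h2Rpos : (0:ℝ) < 2*R := by linarith
    have hquot0 : 0 ≤ (ξ₀ - ξ)/(2*R) := div_nonneg (by linarith) (by linarith)
    have hn1 : (n:ℝ) ≤ (ξ₀ - ξ)/(2*R) := Nat.floor_le hquot0
    have hn2 : (ξ₀ - ξ)/(2*R) < n + 1 := Nat.lt_floor_add_one _
    have hn1' : 2*R*(n:ℝ) ≤ ξ₀ - ξ := by
      have := (le_div_iff₀ h2Rpos).1 hn1
      linarith
    have hmono : V ξ ≤ V (ξ₀ - 2*R*n) := hVmono (by linarith)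
    have h3 := hiter n
    have hθn : (θ:ℝ)^n = Real.exp ((n:ℝ) * Real.log θ) := by
      rw [Real.exp_nat_mul, Real.exp_log hθpos]
    have hexp : Real.exp ((n:ℝ) * Real.log θ)
        ≤ Real.exp (((ξ₀ - ξ)/(2*R) - 1) * Real.log θ) := by
      apply Real.exp_le_exp.2
      apply mul_le_mul_of_nonpos_right _ hlogθ.le
      linarith
    have hval : ((ξ₀ - ξ)/(2*R) - 1) * Real.log θ = (-ω*(ξ₀ - ξ)) - Real.log θ := by
      rw [hωdef]; field_simp
    have hsplit : Real.exp ((-ω*(ξ₀ - ξ)) - Real.log θ)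
        = Real.exp (-ω*ξ₀) * Real.exp (ω*ξ) * (1/θ) := by
      rw [Real.exp_sub, show -ω*(ξ₀ - ξ) = (-ω*ξ₀) + ω*ξ from by ring, Real.exp_add,
        Real.exp_log hθpos]
      ring
    have hVξ₀1 : 0 ≤ V ξ₀ + 1 := by linarith [hV0 ξ₀]
    calc V ξ ≤ θ^n * V ξ₀ := le_trans hmono h3
      _ ≤ θ^n * (V ξ₀ + 1) := mul_le_mul_of_nonneg_left (by linarith) (pow_nonneg hθpos.le n)
      _ ≤ Real.exp (((ξ₀ - ξ)/(2*R) - 1) * Real.log θ) * (V ξ₀ + 1) := by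
          rw [hθn]; exact mul_le_mul_of_nonneg_right hexp hVξ₀1
      _ = C₁ * Real.exp (ω * ξ) := by
          rw [hval, hsplit, hC₁def]; ring
  -- pointwise bound on U
  have hUbdd : ∀ ξ : ℝ, c * U ξ ≤ (1 + f' 0) * V (ξ + D) := by
    intro ξ
    have hk := hkeyV ξ
    have m1 : V (ξ + d1) ≤ V (ξ + D) := hVmono (by linarith [habs1.2])
    have m1' : V (ξ - d1) ≤ V (ξ + D) := hVmono (by linarith [habs1.1])
    have m2 : V (ξ + d2) ≤ V (ξ + D) := hVmono (by linarith [habs2.2])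
    have m2' : V (ξ - d2) ≤ V (ξ + D) := hVmono (by linarith [habs2.1])
    have m3 : V (ξ + d3) ≤ V (ξ + D) := hVmono (by linarith [habs3.2])
    have m3' : V (ξ - d3) ≤ V (ξ + D) := hVmono (by linarith [habs3.1])
    have hFb := hFbd ξ
    have hVle : V ξ ≤ V (ξ + D) := hVmono (by linarith)
    have hVnn := hV0 ξ
    have hfV : f' 0 * V ξ ≤ f' 0 * V (ξ + D) := mul_le_mul_of_nonneg_left hVle hfp0.le
    linarith
  set C₂ : ℝ := (1 + f' 0)/c * C₁ * Real.exp (ω*D) with hC₂def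
  have hC₂pos : 0 < C₂ :=
    mul_pos (mul_pos (div_pos (by linarith) hc) hC₁pos) (Real.exp_pos _)
  have hcase1 : ∀ ξ : ℝ, ξ ≤ ξ₀ - D → U ξ ≤ C₂ * Real.exp (ω*ξ) := by
    intro ξ hξ
    have h1 := hUbdd ξ
    have h2 := hVexp (ξ + D) (by linarith)
    have h3 : c * U ξ ≤ (1 + f' 0) * (C₁ * Real.exp (ω*(ξ+D))) :=
      le_trans h1 (mul_le_mul_of_nonneg_left h2 (by linarith))
    rw [show ω*(ξ+D) = ω*ξ + ω*D from by ring, Real.exp_add] at h3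
    have h4 : U ξ ≤ ((1 + f' 0) * (C₁ * (Real.exp (ω*ξ) * Real.exp (ω*D))))/c := by
      rw [le_div_iff₀ hc, mul_comm]
      exact h3
    calc U ξ ≤ ((1 + f' 0) * (C₁ * (Real.exp (ω*ξ) * Real.exp (ω*D))))/c := h4
      _ = C₂ * Real.exp (ω*ξ) := by rw [hC₂def]; field_simp
  set C : ℝ := C₂ + Real.exp (-ω*(ξ₀ - D)) with hCdef
  have hCpos : 0 < C := by positivity
  refine ⟨ω, C, hω, hCpos, ?_⟩
  intro ξ hξ0
  have hepos : 0 < Real.exp (ω*ξ) := Real.exp_pos _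
  rcases le_or_gt ξ (ξ₀ - D) with h | h
  · have h1 := hcase1 ξ h
    have h2 : 0 < Real.exp (-ω*(ξ₀ - D)) := Real.exp_pos _
    rw [hCdef]
    nlinarith
  · have h1 : U ξ ≤ 1 := hU1 ξ
    have h2 : (1:ℝ) ≤ Real.exp (-ω*(ξ₀ - D)) * Real.exp (ω*ξ) := by
      rw [← Real.exp_add]
      have hnn : (0:ℝ) ≤ -ω*(ξ₀ - D) + ω*ξ := by nlinarith
      calc (1:ℝ) = Real.exp 0 := Real.exp_zero.symm
        _ ≤ _ := Real.exp_le_exp.2 hnn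
    rw [hCdef]
    nlinarith
end

section
/- (Strong comparison principle.) Let U₁ and U₂ be traveling waves with the same speed c, and suppose U₁(ξ) ≤ U₂(ξ) for all ξ ∈ ℝ. Then either U₁(ξ) = U₂(ξ) for all ξ ∈ ℝ, or U₁(ξ) < U₂(ξ) for all ξ ∈ ℝ. -/
open Real Set Filter

lemma window_top_s18 {U : ℝ → ℝ} (hc : Continuous U) {l : ℝ} (hl : Tendsto U atTop (nhds l)) (d : ℝ) :
    Tendsto (fun R => ∫ x in R..(R+d), U x) atTop (nhds (d*l)) := by
  rw [Metric.tendsto_atTop]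
  intro ε hε
  have hCpos : 0 < ε / (|d| + 1) := by positivity
  obtain ⟨M, hM⟩ := (Metric.tendsto_atTop.1 hl) (ε / (|d| + 1)) hCpos
  refine ⟨M + |d|, fun R hR => ?_⟩
  have key : ∀ x ∈ Set.uIoc R (R+d), ‖U x - l‖ ≤ ε / (|d| + 1) := by
    intro x hx
    have h1 : min R (R+d) < x := hx.1
    have h2 : M ≤ x := by
      have hm : R - |d| ≤ min R (R+d) := le_min (by linarith [abs_nonneg d]) (by linarith [neg_abs_le d])
      linarith
    have := hM x h2
    rw [Real.dist_eq] at this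
    simpa [Real.norm_eq_abs] using this.le
  have heq : (∫ x in R..(R+d), U x) - d * l = ∫ x in R..(R+d), (U x - l) := by
    rw [intervalIntegral.integral_sub (hc.intervalIntegrable _ _) (intervalIntegrable_const),
      intervalIntegral.integral_const]
    simp [smul_eq_mul]
  rw [Real.dist_eq, heq]
  calc |∫ x in R..(R+d), (U x - l)| ≤ (ε / (|d| + 1)) * |R + d - R| := by
        simpa [Real.norm_eq_abs] using intervalIntegral.norm_integral_le_of_norm_le_const key
    _ ≤ (ε / (|d| + 1)) * |d| := by
        apply mul_le_mul_of_nonneg_left _ hCpos.le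
        simp [add_sub_cancel_left]
    _ < ε := by
        rw [div_mul_eq_mul_div, div_lt_iff₀ (by positivity)]
        nlinarith [abs_nonneg d]

lemma window_bot_s18 {U : ℝ → ℝ} (hc : Continuous U) {l : ℝ} (hl : Tendsto U atBot (nhds l)) (d : ℝ) :
    Tendsto (fun R => ∫ x in (-R)..(-R+d), U x) atTop (nhds (d*l)) := by
  rw [Metric.tendsto_atTop]
  intro ε hε
  have hCpos : 0 < ε / (|d| + 1) := by positivity
  obtain ⟨M, hM⟩ := Filter.eventually_atBot.1 (hl (Metric.ball_mem_nhds l hCpos))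
  refine ⟨|d| - M, fun R hR => ?_⟩
  have key : ∀ x ∈ Set.uIoc (-R) (-R+d), ‖U x - l‖ ≤ ε / (|d| + 1) := by
    intro x hx
    have h1 : x ≤ max (-R) (-R+d) := hx.2
    have h2 : x ≤ M := by
      have hm : max (-R) (-R+d) ≤ -R + |d| := max_le (by linarith [abs_nonneg d]) (by linarith [le_abs_self d])
      linarith
    have := Metric.mem_ball.1 (hM x h2)
    rw [Real.dist_eq] at this
    simpa [Real.norm_eq_abs] using this.le
  have heq : (∫ x in (-R)..(-R+d), U x) - d * l = ∫ x in (-R)..(-R+d), (U x - l) := by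
    rw [intervalIntegral.integral_sub (hc.intervalIntegrable _ _) (intervalIntegrable_const),
      intervalIntegral.integral_const]
    simp [smul_eq_mul]
  rw [Real.dist_eq, heq]
  calc |∫ x in (-R)..(-R+d), (U x - l)| ≤ (ε / (|d| + 1)) * |(-R + d) - (-R)| := by
        simpa [Real.norm_eq_abs] using intervalIntegral.norm_integral_le_of_norm_le_const key
    _ ≤ (ε / (|d| + 1)) * |d| := by
        apply mul_le_mul_of_nonneg_left _ hCpos.le
        simp [neg_add_cancel_left]
    _ < ε := by
        rw [div_mul_eq_mul_div, div_lt_iff₀ (by positivity)]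
        nlinarith [abs_nonneg d]

lemma shift_integral {U : ℝ → ℝ} (hc : Continuous U) (d R : ℝ) :
    (∫ x in (-R)..R, (U (x+d) - U x)) =
      (∫ x in R..(R+d), U x) - (∫ x in (-R)..(-R+d), U x) := by
  have hi : ∀ a b : ℝ, IntervalIntegrable U MeasureTheory.volume a b :=
    fun a b => hc.intervalIntegrable a b
  have hshift : Continuous (fun x => U (x+d)) := hc.comp (continuous_add_right d)
  have h1 : (∫ x in (-R)..R, U (x+d)) = ∫ x in (-R+d)..(R+d), U x :=
    intervalIntegral.integral_comp_add_right U d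
  have h2 := intervalIntegral.integral_add_adjacent_intervals (hi (-R) (-R+d)) (hi (-R+d) (R+d))
  have h3 := intervalIntegral.integral_add_adjacent_intervals (hi (-R) R) (hi R (R+d))
  rw [intervalIntegral.integral_sub (hshift.intervalIntegrable _ _) (hi _ _), h1]
  linarith

lemma speed_ne_zero (α : ℝ) (f f' : ℝ → ℝ) (hf : FisherKPP f f') {c : ℝ} {U : ℝ → ℝ}
    (hU : IsTravelingWave α f c U) : c ≠ 0 := by
  obtain ⟨hC1, hrange, heq, hbot, htop⟩ := hU
  intro hc0
  subst hc0
  have hUc : Continuous U := hC1.continuous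
  set φ : ℝ → ℝ := fun ξ => f (U ξ) with hφ
  have hφc : Continuous φ := by
    rw [continuous_iff_continuousAt]
    intro ξ
    exact ((hf.1 _ (hrange ξ)).continuousAt).comp hUc.continuousAt
  have hφnn : ∀ ξ, 0 ≤ φ ξ := by
    intro ξ
    rcases (hrange ξ).1.eq_or_lt with h0 | h0
    · simp [hφ, ← h0, hf.2.2.1]
    rcases (hrange ξ).2.eq_or_lt with h1 | h1
    · simp [hφ, h1, hf.2.2.2.1]
    · exact (hf.2.2.2.2.2 _ ⟨h0, h1⟩).1.le
  have heq' : ∀ ξ, φ ξ = -(1/6) * Dh α U ξ := by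
    intro ξ
    have h := heq ξ
    rw [zero_mul] at h
    simp only [hφ]
    linarith
  -- pointwise expansion of φ
  have hφS : ∀ x, φ x = -(1/6) * (((U (x + delta1 α) - U x) + (U (x + -(delta1 α)) - U x))
      + ((U (x + delta2 α) - U x) + (U (x + -(delta2 α)) - U x))
      + ((U (x + delta3 α) - U x) + (U (x + -(delta3 α)) - U x))) := by
    intro x
    rw [heq']
    unfold Dh
    rw [show x - delta1 α = x + -(delta1 α) from by ring,
        show x - delta2 α = x + -(delta2 α) from by ring,
        show x - delta3 α = x + -(delta3 α) from by ring]
    ring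
  have hDc : ∀ d : ℝ, Continuous fun x => U (x + d) - U x :=
    fun d => (hUc.comp (continuous_add_right d)).sub hUc
  have hDi : ∀ (d a b : ℝ), IntervalIntegrable (fun x => U (x + d) - U x) MeasureTheory.volume a b :=
    fun d a b => (hDc d).intervalIntegrable a b
  set G : ℝ → ℝ := fun R => ∫ x in (-R)..R, φ x with hG
  have hGeq : ∀ R, G R = -(1/6) *
      ((((∫ x in R..(R+delta1 α), U x) - ∫ x in (-R)..(-R+delta1 α), U x)
        + ((∫ x in R..(R+ -(delta1 α)), U x) - ∫ x in (-R)..(-R+ -(delta1 α)), U x))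
      + (((∫ x in R..(R+delta2 α), U x) - ∫ x in (-R)..(-R+delta2 α), U x)
        + ((∫ x in R..(R+ -(delta2 α)), U x) - ∫ x in (-R)..(-R+ -(delta2 α)), U x))
      + (((∫ x in R..(R+delta3 α), U x) - ∫ x in (-R)..(-R+delta3 α), U x)
        + ((∫ x in R..(R+ -(delta3 α)), U x) - ∫ x in (-R)..(-R+ -(delta3 α)), U x))) := by
    intro R
    have step1 : G R = ∫ x in (-R)..R, (-(1/6) * (((U (x + delta1 α) - U x) + (U (x + -(delta1 α)) - U x))
      + ((U (x + delta2 α) - U x) + (U (x + -(delta2 α)) - U x))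
      + ((U (x + delta3 α) - U x) + (U (x + -(delta3 α)) - U x)))) :=
      intervalIntegral.integral_congr (fun x _ => hφS x)
    rw [step1, intervalIntegral.integral_const_mul]
    congr 1
    rw [intervalIntegral.integral_add (((hDi (delta1 α) _ _).add (hDi (-(delta1 α)) _ _)).add
          ((hDi (delta2 α) _ _).add (hDi (-(delta2 α)) _ _))) ((hDi (delta3 α) _ _).add (hDi (-(delta3 α)) _ _)),
       intervalIntegral.integral_add ((hDi (delta1 α) _ _).add (hDi (-(delta1 α)) _ _))
          ((hDi (delta2 α) _ _).add (hDi (-(delta2 α)) _ _)),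
       intervalIntegral.integral_add (hDi (delta1 α) _ _) (hDi (-(delta1 α)) _ _),
       intervalIntegral.integral_add (hDi (delta2 α) _ _) (hDi (-(delta2 α)) _ _),
       intervalIntegral.integral_add (hDi (delta3 α) _ _) (hDi (-(delta3 α)) _ _),
       shift_integral hUc (delta1 α) R, shift_integral hUc (-(delta1 α)) R,
       shift_integral hUc (delta2 α) R, shift_integral hUc (-(delta2 α)) R,
       shift_integral hUc (delta3 α) R, shift_integral hUc (-(delta3 α)) R]
  -- limit of G is 0
  have key : ∀ d : ℝ, Tendsto (fun R => (∫ x in R..(R+d), U x) - (∫ x in (-R)..(-R+d), U x))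
      atTop (nhds d) := by
    intro d
    have h1 := window_top_s18 hUc htop d
    have h2 := window_bot_s18 hUc hbot d
    have h3 := h1.sub h2
    simpa using h3
  have hGlim : Tendsto G atTop (nhds 0) := by
    have hA := ((((key (delta1 α)).add (key (-(delta1 α)))).add
        ((key (delta2 α)).add (key (-(delta2 α))))).add
        ((key (delta3 α)).add (key (-(delta3 α))))).const_mul (-(1/6) : ℝ)
    have hfun : G = fun R => -(1/6) *
      ((((∫ x in R..(R+delta1 α), U x) - ∫ x in (-R)..(-R+delta1 α), U x)
        + ((∫ x in R..(R+ -(delta1 α)), U x) - ∫ x in (-R)..(-R+ -(delta1 α)), U x))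
      + (((∫ x in R..(R+delta2 α), U x) - ∫ x in (-R)..(-R+delta2 α), U x)
        + ((∫ x in R..(R+ -(delta2 α)), U x) - ∫ x in (-R)..(-R+ -(delta2 α)), U x))
      + (((∫ x in R..(R+delta3 α), U x) - ∫ x in (-R)..(-R+delta3 α), U x)
        + ((∫ x in R..(R+ -(delta3 α)), U x) - ∫ x in (-R)..(-R+ -(delta3 α)), U x))) := funext hGeq
    rw [hfun]
    have hval : (-(1/6) : ℝ) * ((delta1 α + -(delta1 α)) + (delta2 α + -(delta2 α))
        + (delta3 α + -(delta3 α))) = 0 := by ring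
    rw [← hval]
    exact hA
  -- find a point with φ > 0
  obtain ⟨ξs, hξs⟩ : ∃ ξ, U ξ = 1/2 := by
    obtain ⟨a, ha⟩ := (hbot.eventually_lt_const (by norm_num : (0:ℝ) < 1/2)).exists
    obtain ⟨b, hb1, hb2⟩ := ((htop.eventually_const_lt (by norm_num : (1/2:ℝ) < 1)).and
      (eventually_ge_atTop a)).exists
    have := intermediate_value_Icc hb2 hUc.continuousOn
    obtain ⟨ξ, _, hξ⟩ := this ⟨ha.le, hb1.le⟩
    exact ⟨ξ, hξ⟩
  have hp : 0 < φ ξs := by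
    have := (hf.2.2.2.2.2 (1/2) ⟨by norm_num, by norm_num⟩).1
    simpa [hφ, hξs] using this
  set p := φ ξs with hpdef
  obtain ⟨ε, hε, hball⟩ := Metric.eventually_nhds_iff.1
    (hφc.continuousAt.eventually_const_lt (half_lt_self hp))
  set η := ε/2 with hη
  have hη0 : 0 < η := by positivity
  -- lower bound for G R when R is large
  have hlow : ∀ R, |ξs| + η ≤ R → η * p ≤ G R := by
    intro R hR
    have h1 : -R ≤ ξs - η := by
      have := neg_abs_le ξs; linarith
    have h2 : ξs + η ≤ R := by
      have := le_abs_self ξs; linarith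
    have hiφ : ∀ a b : ℝ, IntervalIntegrable φ MeasureTheory.volume a b :=
      fun a b => hφc.intervalIntegrable a b
    have hadd1 := intervalIntegral.integral_add_adjacent_intervals
      (hiφ (-R) (ξs - η)) (hiφ (ξs - η) (ξs + η))
    have hadd2 := intervalIntegral.integral_add_adjacent_intervals
      (hiφ (-R) (ξs + η)) (hiφ (ξs + η) R)
    have hnn1 : 0 ≤ ∫ x in (-R)..(ξs - η), φ x :=
      intervalIntegral.integral_nonneg h1 (fun x _ => hφnn x)
    have hnn2 : 0 ≤ ∫ x in (ξs + η)..R, φ x :=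
      intervalIntegral.integral_nonneg h2 (fun x _ => hφnn x)
    have hmid : η * p ≤ ∫ x in (ξs - η)..(ξs + η), φ x := by
      have hc1 : ((ξs - η) : ℝ) ≤ ξs + η := by linarith
      have := intervalIntegral.integral_mono_on hc1
        (intervalIntegrable_const (c := p/2)) (hiφ _ _)
        (fun x hx => by
          have hdist : dist x ξs < ε := by
            rw [Real.dist_eq, abs_lt]
            constructor <;> [linarith [hx.1]; linarith [hx.2]]
          exact (hball hdist).le)
      rw [intervalIntegral.integral_const] at this
      have : (ξs + η - (ξs - η)) * (p/2) ≤ ∫ x in (ξs - η)..(ξs + η), φ x := by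
        simpa [smul_eq_mul] using this
      calc η * p = (ξs + η - (ξs - η)) * (p/2) := by ring
        _ ≤ _ := this
    have : G R = (∫ x in (-R)..(ξs - η), φ x) + (∫ x in (ξs - η)..(ξs + η), φ x)
        + (∫ x in (ξs + η)..R, φ x) := by
      rw [hG]; dsimp only; linarith
    linarith
  -- contradiction
  have hev := (Metric.tendsto_atTop.1 hGlim) (η * p) (by positivity)
  obtain ⟨N, hN⟩ := hev
  set R := max N (|ξs| + η) with hR
  have hd := hN R (le_max_left _ _)
  have hl := hlow R (le_max_right _ _)
  rw [Real.dist_eq, sub_zero, abs_lt] at hd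
  linarith [hd.2]

theorem stmt18 (α : ℝ) (f f' : ℝ → ℝ) (hf : FisherKPP f f')
    (c : ℝ) (U₁ U₂ : ℝ → ℝ)
    (hU₁ : IsTravelingWave α f c U₁) (hU₂ : IsTravelingWave α f c U₂)
    (hle : ∀ ξ : ℝ, U₁ ξ ≤ U₂ ξ) :
    (∀ ξ : ℝ, U₁ ξ = U₂ ξ) ∨ (∀ ξ : ℝ, U₁ ξ < U₂ ξ) := by
  by_cases hstrict : ∀ ξ, U₁ ξ < U₂ ξ
  · exact Or.inr hstrict
  left
  push_neg at hstrict
  obtain ⟨ξ₀, hξ₀⟩ := hstrict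
  have hc : c ≠ 0 := speed_ne_zero α f f' hf hU₁
  obtain ⟨hC1, hr1, he1, -, -⟩ := hU₁
  obtain ⟨hC2, hr2, he2, -, -⟩ := hU₂
  set W : ℝ → ℝ := fun ξ => U₂ ξ - U₁ ξ with hW
  have hWnn : ∀ ξ, 0 ≤ W ξ := fun ξ => sub_nonneg.2 (hle ξ)
  have hW0 : W ξ₀ = 0 := le_antisymm (sub_nonpos.2 hξ₀) (hWnn ξ₀)
  have hd1 : Differentiable ℝ U₁ := hC1.differentiable one_ne_zero
  have hd2 : Differentiable ℝ U₂ := hC2.differentiable one_ne_zero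
  have hdW : Differentiable ℝ W := hd2.sub hd1
  have hWder : ∀ ξ, deriv W ξ = deriv U₂ ξ - deriv U₁ ξ := fun ξ => deriv_sub (hd2 ξ) (hd1 ξ)
  have heW : ∀ ξ, c * deriv W ξ = (1/6) * Dh α W ξ + (f (U₂ ξ) - f (U₁ ξ)) := by
    intro ξ
    rw [hWder, mul_sub]
    have h1 := he1 ξ
    have h2 := he2 ξ
    simp only [Dh] at h1 h2 ⊢
    simp only [hW]
    linarith
  -- Lipschitz bound for f'
  obtain ⟨L, hL⟩ : ∃ L : ℝ, ∀ s ∈ Set.Icc (0:ℝ) 1, |f' s| ≤ L := by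
    obtain ⟨L, hL⟩ := (isCompact_Icc (a := (0:ℝ)) (b := 1)).exists_bound_of_continuousOn hf.2.1
    exact ⟨L, fun s hs => by simpa [Real.norm_eq_abs] using hL s hs⟩
  have hL0 : 0 ≤ L := le_trans (abs_nonneg _) (hL 0 (by norm_num))
  have hfcont : ContinuousOn f (Set.Icc (0:ℝ) 1) :=
    fun s hs => ((hf.1 s hs).continuousAt).continuousWithinAt
  have hfd : ∀ ξ, -(L * W ξ) ≤ f (U₂ ξ) - f (U₁ ξ) := by
    intro ξ
    rcases eq_or_lt_of_le (hle ξ) with h | h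
    · rw [← h]
      simp [hW, ← h]
    · have hsub : Set.Icc (U₁ ξ) (U₂ ξ) ⊆ Set.Icc (0:ℝ) 1 :=
        Set.Icc_subset_Icc (hr1 ξ).1 (hr2 ξ).2
      obtain ⟨t, ht, hslope⟩ := exists_hasDerivAt_eq_slope f f' h (hfcont.mono hsub)
        (fun x hx => hf.1 x (hsub ⟨hx.1.le, hx.2.le⟩))
      have htmem : t ∈ Set.Icc (0:ℝ) 1 := hsub ⟨ht.1.le, ht.2.le⟩
      have hdiff : f (U₂ ξ) - f (U₁ ξ) = f' t * W ξ := by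
        have hne : U₂ ξ - U₁ ξ ≠ 0 := ne_of_gt (sub_pos.2 h)
        field_simp at hslope
        simp only [hW]
        linarith [hslope]
      rw [hdiff]
      have h1 : -L ≤ f' t := neg_le_of_abs_le (hL t htmem)
      have h2 := hWnn ξ
      nlinarith
  have hUeq : ∀ ξ, W ξ = 0 → U₂ ξ = U₁ ξ := by
    intro ξ hz
    have : U₂ ξ - U₁ ξ = 0 := hz
    linarith
  clear_value W
  -- propagation of zeros
  have hprop : ∀ ξ, W ξ = 0 → (W (ξ + delta1 α) = 0 ∧ W (ξ - delta1 α) = 0)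
      ∧ (W (ξ + delta2 α) = 0 ∧ W (ξ - delta2 α) = 0) := by
    intro ξ hz
    have hmin : IsLocalMin W ξ := Filter.Eventually.of_forall (fun y => by
      rw [hz]; exact hWnn y)
    have hder0 : deriv W ξ = 0 := hmin.deriv_eq_zero
    have heqz := heW ξ
    rw [hder0, mul_zero] at heqz
    have hfes : f (U₂ ξ) = f (U₁ ξ) := by rw [hUeq ξ hz]
    rw [hfes, sub_self, add_zero] at heqz
    simp only [Dh] at heqz
    refine ⟨⟨?_, ?_⟩, ?_, ?_⟩ <;>
      linarith [hWnn (ξ + delta1 α), hWnn (ξ - delta1 α), hWnn (ξ + delta2 α),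
        hWnn (ξ - delta2 α), hWnn (ξ + delta3 α), hWnn (ξ - delta3 α), hz]
  -- a strictly positive propagation distance
  obtain ⟨d, hd0, hdp⟩ : ∃ d : ℝ, 0 < d ∧ ∀ ξ, W ξ = 0 → W (ξ + d) = 0 ∧ W (ξ - d) = 0 := by
    by_cases hca : Real.cos α = 0
    · have hsa : Real.sin α ≠ 0 := by
        intro h
        have := Real.sin_sq_add_cos_sq α
        rw [h, hca] at this
        norm_num at this
      have hδ2 : delta2 α ≠ 0 := by
        have he : delta2 α = (Real.sqrt 3 / 2) * Real.sin α := by simp [delta2, hca]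
        rw [he]
        exact mul_ne_zero (by positivity) hsa
      refine ⟨|delta2 α|, abs_pos.2 hδ2, fun ξ hz => ?_⟩
      have h := (hprop ξ hz).2
      rcases abs_cases (delta2 α) with ⟨he, -⟩ | ⟨he, -⟩
      · rw [he]; exact h
      · rw [he]
        refine ⟨?_, ?_⟩
        · rw [← sub_eq_add_neg]; exact h.2
        · rw [sub_neg_eq_add]; exact h.1
    · have hδ1 : delta1 α ≠ 0 := by simpa [delta1] using hca
      refine ⟨|delta1 α|, abs_pos.2 hδ1, fun ξ hz => ?_⟩
      have h := (hprop ξ hz).1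
      rcases abs_cases (delta1 α) with ⟨he, -⟩ | ⟨he, -⟩
      · rw [he]; exact h
      · rw [he]
        refine ⟨?_, ?_⟩
        · rw [← sub_eq_add_neg]; exact h.2
        · rw [sub_neg_eq_add]; exact h.1
  -- Gronwall-type argument
  set k := (1 + L) / c with hk
  have hkey : ∀ ξ, 0 ≤ c * deriv W ξ + (1 + L) * W ξ := by
    intro ξ
    have h := heW ξ
    have h6 : -(W ξ) ≤ (1/6) * Dh α W ξ := by
      simp only [Dh]
      linarith [hWnn (ξ + delta1 α), hWnn (ξ - delta1 α), hWnn (ξ + delta2 α),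
        hWnn (ξ - delta2 α), hWnn (ξ + delta3 α), hWnn (ξ - delta3 α)]
    linarith [hfd ξ]
  set g : ℝ → ℝ := fun ξ => Real.exp (k * ξ) * W ξ with hg
  have hgd : ∀ ξ, HasDerivAt g (Real.exp (k * ξ) * (k * W ξ + deriv W ξ)) ξ := by
    intro ξ
    have h0 : HasDerivAt (fun ξ : ℝ => k * ξ) k ξ := by
      simpa using (hasDerivAt_id ξ).const_mul k
    have h1 : HasDerivAt (fun ξ => Real.exp (k * ξ)) (Real.exp (k * ξ) * k) ξ := h0.exp
    have h2 : HasDerivAt W (deriv W ξ) ξ := (hdW ξ).hasDerivAt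
    have : HasDerivAt (fun y => Real.exp (k * y) * W y)
        (Real.exp (k * ξ) * k * W ξ + Real.exp (k * ξ) * deriv W ξ) ξ := h1.mul h2
    convert this using 1
    ring
  have hquot : ∀ ξ, k * W ξ + deriv W ξ = (c * deriv W ξ + (1 + L) * W ξ) / c := by
    intro ξ
    rw [hk]
    field_simp
    ring
  have hgz : g ξ₀ = 0 := by simp [hg, hW0]
  have hgnn : ∀ ξ, 0 ≤ g ξ := fun ξ => mul_nonneg (Real.exp_pos _).le (hWnn ξ)
  have hWzero_of_g : ∀ ξ, g ξ = 0 → W ξ = 0 := by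
    intro ξ hgξ
    have := Real.exp_pos (k * ξ)
    rcases mul_eq_zero.1 hgξ with h | h
    · exact absurd h (ne_of_gt this)
    · exact h
  -- a half-line of zeros
  have hhalfline : (∀ ξ ≤ ξ₀, W ξ = 0) ∨ (∀ ξ, ξ₀ ≤ ξ → W ξ = 0) := by
    rcases lt_or_gt_of_ne hc with hcneg | hcpos
    · right
      have hanti : Antitone g := by
        apply antitone_of_deriv_nonpos (fun ξ => (hgd ξ).differentiableAt)
        intro ξ
        rw [(hgd ξ).deriv]
        have hq : k * W ξ + deriv W ξ ≤ 0 := by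
          rw [hquot ξ]
          exact div_nonpos_iff.2 (Or.inl ⟨hkey ξ, hcneg.le⟩)
        exact mul_nonpos_of_nonneg_of_nonpos (Real.exp_pos _).le hq
      intro ξ hξ
      exact hWzero_of_g ξ (le_antisymm (hgz ▸ hanti hξ) (hgnn ξ))
    · left
      have hmono : Monotone g := by
        apply monotone_of_deriv_nonneg (fun ξ => (hgd ξ).differentiableAt)
        intro ξ
        rw [(hgd ξ).deriv]
        have hq : 0 ≤ k * W ξ + deriv W ξ := by
          rw [hquot ξ]
          exact div_nonneg (hkey ξ) hcpos.le
        exact mul_nonneg (Real.exp_pos _).le hq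
      intro ξ hξ
      exact hWzero_of_g ξ (le_antisymm (hgz ▸ hmono hξ) (hgnn ξ))
  -- propagate the half-line to all of ℝ
  have hall : ∀ ξ, W ξ = 0 := by
    rcases hhalfline with hh | hh
    · have hstep : ∀ n : ℕ, ∀ ξ, ξ ≤ ξ₀ + n * d → W ξ = 0 := by
        intro n
        induction n with
        | zero => intro ξ h; exact hh ξ (by simpa using h)
        | succ n ih =>
          intro ξ h
          have h' : ξ - d ≤ ξ₀ + n * d := by push_cast at h ⊢; linarith
          have := (hdp (ξ - d) (ih _ h')).1
          simpa using this
      intro ξ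
      obtain ⟨n, hn⟩ := exists_nat_ge ((ξ - ξ₀) / d)
      refine hstep n ξ ?_
      have := (div_le_iff₀ hd0).1 hn
      linarith
    · have hstep : ∀ n : ℕ, ∀ ξ, ξ₀ - n * d ≤ ξ → W ξ = 0 := by
        intro n
        induction n with
        | zero => intro ξ h; exact hh ξ (by simpa using h)
        | succ n ih =>
          intro ξ h
          have h' : ξ₀ - n * d ≤ ξ + d := by push_cast at h ⊢; linarith
          have := (hdp (ξ + d) (ih _ h')).2
          simpa using this
      intro ξ
      obtain ⟨n, hn⟩ := exists_nat_ge ((ξ₀ - ξ) / d)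
      refine hstep n ξ ?_
      have := (div_le_iff₀ hd0).1 hn
      linarith
  intro ξ
  exact (hUeq ξ (hall ξ)).symm
end
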